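/- arXiv:1908.08208 — 2 statements merged into one kernel-verified Lean document; each statement's English description precedes it below -/
import Mathlib

section
/- Every subsequence of (p_n) that converges uniformly on [0,1] converges to a fixed point of the operator T: if n_1 < n_2 < … and p_{n_j} → p̄ uniformly, then p̄ is continuous and T p̄ = p̄. -/
open Set Filter

noncomputable def Tmap (c : ℝ → ℝ) (g : ℕ → ℝ) (δ : ℝ) (p : ℝ → ℝ) (s : ℝ) : ℝ :=
  sInf {y : ℝ | ∃ k : ℕ, ∃ t : ℝ, 1 ≤ k ∧ 0 ≤ t ∧ t ≤ s ∧
    y = c (s - t) + g k + δ * k * p (t / k)}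

noncomputable def interp (h : ℝ) (v : ℕ → ℝ) (x : ℝ) : ℝ :=
  v ⌊x / h⌋₊ + (x / h - ⌊x / h⌋₊) * (v (⌊x / h⌋₊ + 1) - v ⌊x / h⌋₊)

noncomputable def gridVal (c : ℝ → ℝ) (g : ℕ → ℝ) (δ h : ℝ) : ℕ → ℝ
  | 0 => 0
  | j + 1 =>
    sInf {y : ℝ | ∃ k : ℕ, ∃ t : ℝ, 1 ≤ k ∧ 0 ≤ t ∧ t ≤ j * h ∧
      y = c ((j + 1) * h - t) + g k +
        δ * k * interp h (fun i => gridVal c g δ h (min i j)) (t / k)}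
  termination_by j => j
  decreasing_by exact Nat.lt_succ_of_le (Nat.min_le_right i j)

noncomputable def algP (c : ℝ → ℝ) (g : ℕ → ℝ) (δ : ℝ) (n : ℕ) : ℝ → ℝ :=
  interp ((1 / 2 : ℝ) ^ n) (gridVal c g δ ((1 / 2 : ℝ) ^ n))

open Topology

lemma interp_zero (h : ℝ) (v : ℕ → ℝ) : interp h v 0 = v 0 := by
  simp [interp]

lemma interp_grid' {h : ℝ} (hh : 0 < h) (v : ℕ → ℝ) (j : ℕ) :
    interp h v (j * h) = v j := by
  have : (j * h) / h = (j : ℝ) := by field_simp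
  simp [interp, this]

lemma floor_le_of_le' {h x : ℝ} (hh : 0 < h) {J : ℕ} (hx0 : 0 ≤ x) (hx : x < J * h) :
    ⌊x / h⌋₊ + 1 ≤ J := by
  have h1 : x / h < J := by rw [div_lt_iff₀ hh]; linarith
  have := (Nat.floor_lt (by positivity)).mpr h1
  omega

lemma interp_rep' {h : ℝ} (hh : 0 < h) (v : ℕ → ℝ) {x : ℝ} (hx : 0 ≤ x) :
    ∃ θ : ℝ, 0 ≤ θ ∧ θ < 1 ∧
      interp h v x = (1 - θ) * v ⌊x / h⌋₊ + θ * v (⌊x / h⌋₊ + 1) := by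
  refine ⟨x / h - ⌊x / h⌋₊, ?_, ?_, by ring_nf; rw [interp]; ring⟩
  · have := Nat.floor_le (show (0:ℝ) ≤ x / h by positivity)
    linarith
  · have := Nat.lt_floor_add_one (x / h)
    push_cast at this ⊢; linarith

lemma interp_mem_Icc' {h : ℝ} (hh : 0 < h) {v : ℕ → ℝ} {J : ℕ} {a b x : ℝ}
    (hx0 : 0 ≤ x) (hxJ : x ≤ J * h) (hv : ∀ i ≤ J, a ≤ v i ∧ v i ≤ b) :
    a ≤ interp h v x ∧ interp h v x ≤ b := by
  rcases eq_or_lt_of_le hxJ with rfl | hlt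
  · rw [interp_grid' hh]; exact hv J le_rfl
  · obtain ⟨θ, hθ0, hθ1, hrep⟩ := interp_rep' hh v hx0
    have hi : ⌊x / h⌋₊ + 1 ≤ J := floor_le_of_le' hh hx0 hlt
    obtain ⟨ha1, hb1⟩ := hv ⌊x / h⌋₊ (by omega)
    obtain ⟨ha2, hb2⟩ := hv _ hi
    rw [hrep]
    constructor <;> nlinarith

lemma interp_congr' {h : ℝ} (hh : 0 < h) {v w : ℕ → ℝ} {J : ℕ} {x : ℝ}
    (hx0 : 0 ≤ x) (hxJ : x ≤ J * h) (hv : ∀ i ≤ J, v i = w i) :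
    interp h v x = interp h w x := by
  rcases eq_or_lt_of_le hxJ with rfl | hlt
  · rw [interp_grid' hh, interp_grid' hh, hv J le_rfl]
  · have hi : ⌊x / h⌋₊ + 1 ≤ J := floor_le_of_le' hh hx0 hlt
    rw [interp, interp, hv ⌊x / h⌋₊ (by omega), hv _ hi]


lemma floor_div_eq {h x : ℝ} (hh : 0 < h) {i : ℕ} (h1 : i * h ≤ x) (h2 : x < (i + 1) * h) :
    ⌊x / h⌋₊ = i := by
  have hx0 : (0:ℝ) ≤ x / h :=
    div_nonneg (le_trans (by positivity) h1) hh.le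
  rw [Nat.floor_eq_iff hx0]
  constructor
  · rw [le_div_iff₀ hh]; linarith
  · rw [div_lt_iff₀ hh]; push_cast; linarith

lemma interp_continuousOn {h : ℝ} (hh : 0 < h) (v : ℕ → ℝ) :
    ContinuousOn (interp h v) (Ici 0) := by
  intro x hx
  simp only [mem_Ici] at hx
  set i := ⌊x / h⌋₊ with hi
  clear_value i
  have hxh : 0 ≤ x / h := by positivity
  have hlow : (i : ℝ) * h ≤ x := by
    have := Nat.floor_le hxh
    rw [← hi] at this
    calc (i:ℝ) * h ≤ (x / h) * h := by nlinarith
    _ = x := by field_simp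
  have hhigh : x < ((i : ℝ) + 1) * h := by
    have := Nat.lt_floor_add_one (x / h)
    rw [← hi] at this
    calc x = (x / h) * h := by field_simp
    _ < ((i:ℝ) + 1) * h := by nlinarith
  have hA : ∀ j : ℕ, ContinuousAt (fun y : ℝ => v j + (y / h - j) * (v (j + 1) - v j)) x := by
    intro j; fun_prop
  rcases eq_or_lt_of_le hlow with heq | hlt
  · -- x = i * h, grid point
    have hfx : interp h v x = v i := by
      have : x / h = (i : ℝ) := by rw [← heq]; field_simp
      simp [interp, ← hi, this]
    have hright : ContinuousWithinAt (interp h v) (Ici x) x := by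
      rw [← continuousWithinAt_inter (show Iio (((i:ℝ)+1) * h) ∈ nhds x from Iio_mem_nhds hhigh)]
      have hIco : Ici x ∩ Iio (((i:ℝ)+1) * h) = Ico x (((i:ℝ)+1)*h) := rfl
      rw [hIco]
      refine (hA i).continuousWithinAt.congr ?_ ?_
      · intro y hy
        have hfl : ⌊y / h⌋₊ = i := floor_div_eq hh (heq ▸ hy.1) hy.2
        simp [interp, hfl]
      · rw [hfx]
        have : x / h = (i : ℝ) := by rw [← heq]; field_simp
        simp [this]
    rcases eq_or_lt_of_le hx with rfl | hx0
    · exact hright.mono (by simp)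
    · have hi1 : 1 ≤ i := by
        by_contra hc
        push_neg at hc
        interval_cases i
        simp at heq
        nlinarith [heq]
      obtain ⟨j, rfl⟩ : ∃ j, i = j + 1 := ⟨i - 1, by omega⟩
      have hleft : ContinuousWithinAt (interp h v) (Iic x) x := by
        rw [← continuousWithinAt_inter (show Ioi ((j:ℝ) * h) ∈ nhds x from
          Ioi_mem_nhds (by push_cast at heq ⊢; nlinarith [heq]))]
        have hIoc : Iic x ∩ Ioi ((j:ℝ) * h) = Ioc ((j:ℝ)*h) x := by
          ext y; simp [and_comm]
        rw [hIoc]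
        refine (hA j).continuousWithinAt.congr ?_ ?_
        · intro y hy
          rcases eq_or_lt_of_le hy.2 with rfl | hylt
          · rw [hfx]
            have : y / h = ((j:ℝ) + 1) := by rw [← heq]; push_cast; field_simp
            simp [this]
          · have hfl : ⌊y / h⌋₊ = j := floor_div_eq hh hy.1.le (by
              push_cast at heq ⊢; rw [← heq] at hylt; push_cast at hylt; linarith)
            simp [interp, hfl]
        · rw [hfx]
          have : x / h = ((j:ℝ) + 1) := by rw [← heq]; push_cast; field_simp
          simp [this]
      exact (hleft.union hright).mono (by intro y _; exact le_total y x)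
  · -- interior of cell
    have : ContinuousAt (interp h v) x := by
      refine (hA i).congr ?_
      have hmem : Ioo ((i:ℝ)*h) (((i:ℝ)+1)*h) ∈ nhds x := Ioo_mem_nhds hlt hhigh
      filter_upwards [hmem] with y hy
      have hfl : ⌊y / h⌋₊ = i := floor_div_eq hh hy.1.le hy.2
      simp [interp, hfl]
    exact this.continuousWithinAt

section main
variable {c : ℝ → ℝ} {g : ℕ → ℝ} {δ h : ℝ}
variable (hc_mono : StrictMonoOn c (Set.Icc 0 1)) (hc0 : c 0 = 0)
  (hg1 : g 1 = 0) (hg_nonneg : ∀ k : ℕ, 1 ≤ k → 0 ≤ g k) (hδ : 1 < δ) (hh : 0 < h)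

include hc_mono hc0 in
lemma c_nonneg : ∀ x ∈ Set.Icc (0:ℝ) 1, 0 ≤ c x := by
  intro x hx
  rcases eq_or_lt_of_le hx.1 with rfl | h0
  · exact le_of_eq hc0.symm
  · exact le_of_lt (hc0 ▸ hc_mono (by simp) hx h0)

omit hc0 in
include hc_mono in
lemma c_le_c_one : ∀ x ∈ Set.Icc (0:ℝ) 1, c x ≤ c 1 :=
  fun x hx => hc_mono.monotoneOn hx (by simp) hx.2

include hc_mono hc0 hg1 hg_nonneg hδ hh in
lemma gridVal_bounds : ∀ j : ℕ, (j : ℝ) * h ≤ 1 →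
    0 ≤ gridVal c g δ h j ∧ gridVal c g δ h j ≤ c 1 := by
  intro j
  induction j using Nat.strong_induction_on with
  | _ j IH =>
    intro hj1
    match j with
    | 0 => simpa [gridVal] using c_nonneg hc_mono hc0 1 (by norm_num)
    | j + 1 =>
      have hδ0 : (0:ℝ) < δ := by linarith
      have hj1' : ((j:ℝ) + 1) * h ≤ 1 := by push_cast at hj1; linarith
      have hjh : (j : ℝ) * h ≤ 1 := by nlinarith
      have hvb : ∀ i ≤ j, 0 ≤ (fun i => gridVal c g δ h (min i j)) i ∧
          (fun i => gridVal c g δ h (min i j)) i ≤ c 1 := by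
        intro i hi
        simp only [min_eq_left hi]
        exact IH i (by omega) (by
          have : (i:ℝ) ≤ (j:ℝ) := by exact_mod_cast hi
          nlinarith)
      have hbdd : ∀ y ∈ {y : ℝ | ∃ k : ℕ, ∃ t : ℝ, 1 ≤ k ∧ 0 ≤ t ∧ t ≤ j * h ∧
          y = c ((j + 1) * h - t) + g k +
            δ * k * interp h (fun i => gridVal c g δ h (min i j)) (t / k)}, 0 ≤ y := by
        rintro y ⟨k, t, hk, ht0, htj, rfl⟩
        have hk1 : (1:ℝ) ≤ k := by exact_mod_cast hk
        have htk0 : 0 ≤ t / k := by positivity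
        have htkj : t / k ≤ j * h := le_trans (by
          rw [div_le_iff₀ (by linarith)]; nlinarith [le_trans ht0 htj]) htj
        have hint := interp_mem_Icc' hh htk0 htkj hvb
        have harg : (j + 1 : ℝ) * h - t ∈ Set.Icc (0:ℝ) 1 :=
          ⟨by nlinarith, by nlinarith⟩
        have h1 := c_nonneg hc_mono hc0 _ harg
        have h2 := hg_nonneg k hk
        have h3 : (0:ℝ) ≤ δ * k * interp h (fun i => gridVal c g δ h (min i j)) (t / k) :=
          mul_nonneg (mul_nonneg hδ0.le (by positivity)) hint.1
        linarith
      have hmem : c ((j+1) * h) ∈ {y : ℝ | ∃ k : ℕ, ∃ t : ℝ, 1 ≤ k ∧ 0 ≤ t ∧ t ≤ j * h ∧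
          y = c ((j + 1) * h - t) + g k +
            δ * k * interp h (fun i => gridVal c g δ h (min i j)) (t / k)} := by
        refine ⟨1, 0, le_rfl, le_rfl, by positivity, ?_⟩
        have h0 : (0:ℝ) / (1:ℕ) = 0 := by norm_num
        have hgv0 : gridVal c g δ h 0 = 0 := by rw [gridVal]
        rw [h0, interp_zero]
        simp [hg1, hgv0]
      constructor
      · rw [gridVal]
        exact le_csInf ⟨_, hmem⟩ hbdd
      · rw [gridVal]
        refine le_trans (csInf_le ⟨0, hbdd⟩ hmem) ?_
        exact c_le_c_one hc_mono _ ⟨by positivity, hj1'⟩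

include hh in
lemma gridVal_succ_eq (j : ℕ) :
    gridVal c g δ h (j + 1) = sInf {y : ℝ | ∃ k : ℕ, ∃ t : ℝ, 1 ≤ k ∧ 0 ≤ t ∧ t ≤ j * h ∧
      y = c ((j + 1) * h - t) + g k + δ * k * interp h (gridVal c g δ h) (t / k)} := by
  have key : ∀ (k : ℕ) (t : ℝ), 1 ≤ k → 0 ≤ t → t ≤ j * h →
      interp h (fun i => gridVal c g δ h (min i j)) (t / k) =
        interp h (gridVal c g δ h) (t / k) := by
    intro k t hk ht0 htj
    have hk1 : (1:ℝ) ≤ k := by exact_mod_cast hk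
    have htk0 : 0 ≤ t / k := by positivity
    have htkj : t / k ≤ j * h := le_trans (by
      rw [div_le_iff₀ (by linarith)]; nlinarith [le_trans ht0 htj]) htj
    exact interp_congr' hh htk0 htkj (fun i hi => by simp [min_eq_left hi])
  rw [gridVal]
  congr 1
  ext y
  constructor
  · rintro ⟨k, t, hk, ht0, htj, rfl⟩
    exact ⟨k, t, hk, ht0, htj, by rw [key k t hk ht0 htj]⟩
  · rintro ⟨k, t, hk, ht0, htj, rfl⟩
    exact ⟨k, t, hk, ht0, htj, by rw [key k t hk ht0 htj]⟩


include hc_mono hc0 hg1 hg_nonneg hδ in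
omit hh in
lemma algP_bounds (n : ℕ) : ∀ x ∈ Set.Icc (0:ℝ) 1,
    0 ≤ algP c g δ n x ∧ algP c g δ n x ≤ c 1 := by
  intro x hx
  have hh' : (0:ℝ) < (1/2:ℝ)^n := by positivity
  have hJ : ((2^n : ℕ) : ℝ) * (1/2:ℝ)^n = 1 := by
    push_cast
    rw [one_div, inv_pow, mul_inv_cancel₀ (by positivity)]
  refine interp_mem_Icc' hh' hx.1 (by rw [hJ]; exact hx.2) ?_
  intro i hi
  refine gridVal_bounds hc_mono hc0 hg1 hg_nonneg hδ hh' i ?_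
  calc (i:ℝ) * (1/2:ℝ)^n ≤ ((2^n : ℕ):ℝ) * (1/2:ℝ)^n := by
        have : (i:ℝ) ≤ ((2^n:ℕ):ℝ) := by exact_mod_cast hi
        nlinarith
    _ = 1 := hJ

omit hh in
lemma algP_zero (n : ℕ) : algP c g δ n 0 = 0 := by
  have : gridVal c g δ ((1/2:ℝ)^n) 0 = 0 := by rw [gridVal]
  rw [algP, interp_zero, this]

omit hh in
lemma algP_grid (n j : ℕ) :
    algP c g δ n (((j:ℝ) + 1) * (1/2:ℝ)^n) =
      sInf {y : ℝ | ∃ k : ℕ, ∃ t : ℝ, 1 ≤ k ∧ 0 ≤ t ∧ t ≤ (j:ℝ) * (1/2:ℝ)^n ∧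
        y = c (((j:ℝ) + 1) * (1/2:ℝ)^n - t) + g k + δ * k * algP c g δ n (t / (k:ℝ))} := by
  have hh' : (0:ℝ) < (1/2:ℝ)^n := by positivity
  have hcast : ((j:ℝ) + 1) = (((j+1 : ℕ)):ℝ) := by push_cast; ring
  rw [algP, hcast, interp_grid' hh', gridVal_succ_eq hh']
  push_cast
  rfl

end main

lemma le_of_forall_pos_le_add' {a b : ℝ} (H : ∀ ε > (0:ℝ), a ≤ b + ε) : a ≤ b := by
  by_contra hcon
  push_neg at hcon
  have := H ((a - b)/2) (by linarith)
  linarith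

set_option maxHeartbeats 16000000 in
theorem algP_subseq_limit_is_fixed_point (c : ℝ → ℝ) (g : ℕ → ℝ) (δ : ℝ)
(hc_diff : DifferentiableOn ℝ c (Set.Icc 0 1))
    (hc_mono : StrictMonoOn c (Set.Icc 0 1))
    (hc_conv : StrictConvexOn ℝ (Set.Icc 0 1) c)
    (hc0 : c 0 = 0) (hc'0 : 0 < deriv c 0)
    (hg_mono : StrictMonoOn g {k : ℕ | 1 ≤ k})
    (hg1 : g 1 = 0) (hg_nonneg : ∀ k : ℕ, 1 ≤ k → 0 ≤ g k)
    (hg_top : Tendsto g atTop atTop)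
    (hδ : 1 < δ) :
    ∀ φ : ℕ → ℕ, StrictMono φ →
      ∀ pbar : ℝ → ℝ,
        TendstoUniformlyOn (fun j : ℕ => algP c g δ (φ j)) pbar atTop (Set.Icc 0 1) →
        ContinuousOn pbar (Set.Icc 0 1) ∧
          ∀ s ∈ Set.Icc (0 : ℝ) 1, Tmap c g δ pbar s = pbar s := by
  intro φ hφ pbar hconv
  have hδ0 : (0:ℝ) < δ := lt_trans one_pos hδ
  have hcont : ContinuousOn pbar (Set.Icc 0 1) := by
    refine hconv.continuousOn (Filter.Eventually.of_forall fun j => ?_).frequently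
    exact (interp_continuousOn (by positivity) _).mono (fun x hx => hx.1)
  refine ⟨hcont, ?_⟩
  have hc1 : 0 ≤ c 1 := c_nonneg hc_mono hc0 1 ⟨zero_le_one, le_rfl⟩
  have hPb : ∀ n : ℕ, ∀ x ∈ Set.Icc (0:ℝ) 1, 0 ≤ algP c g δ n x ∧ algP c g δ n x ≤ c 1 :=
    fun n => algP_bounds hc_mono hc0 hg1 hg_nonneg hδ n
  have hP0 : ∀ n : ℕ, algP c g δ n 0 = 0 := fun n => algP_zero n
  have hpb0 : pbar 0 = 0 := by
    have ht := hconv.tendsto_at (show (0:ℝ) ∈ Set.Icc (0:ℝ) 1 by norm_num)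
    have h2 : Tendsto (fun j : ℕ => algP c g δ (φ j) 0) atTop (𝓝 0) := by
      simpa [hP0] using (tendsto_const_nhds : Tendsto (fun _ : ℕ => (0:ℝ)) atTop (𝓝 0))
    exact tendsto_nhds_unique ht h2
  have hpbar_mem : ∀ x ∈ Set.Icc (0:ℝ) 1, 0 ≤ pbar x ∧ pbar x ≤ c 1 := by
    intro x hx
    have ht := hconv.tendsto_at hx
    exact ⟨ge_of_tendsto ht (Filter.Eventually.of_forall fun j => (hPb _ x hx).1),
      le_of_tendsto ht (Filter.Eventually.of_forall fun j => (hPb _ x hx).2)⟩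
  obtain ⟨K, hK⟩ : ∃ K : ℕ, ∀ k ≥ K, c 1 + 1 < g k :=
    eventually_atTop.mp (hg_top.eventually (eventually_gt_atTop (c 1 + 1)))
  have hcU : ∀ ε > (0:ℝ), ∃ η > (0:ℝ), ∀ x ∈ Set.Icc (0:ℝ) 1, ∀ y ∈ Set.Icc (0:ℝ) 1,
      |x - y| < η → |c x - c y| < ε := by
    have hu : UniformContinuousOn c (Set.Icc 0 1) :=
      isCompact_Icc.uniformContinuousOn_of_continuous hc_diff.continuousOn
    intro ε hε
    obtain ⟨η, hη, H⟩ := Metric.uniformContinuousOn_iff.mp hu ε hε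
    exact ⟨η, hη, fun x hx y hy hd => by
      simpa [Real.dist_eq] using H x hx y hy (by simpa [Real.dist_eq] using hd)⟩
  have hpU : ∀ ε > (0:ℝ), ∃ η > (0:ℝ), ∀ x ∈ Set.Icc (0:ℝ) 1, ∀ y ∈ Set.Icc (0:ℝ) 1,
      |x - y| < η → |pbar x - pbar y| < ε := by
    have hu : UniformContinuousOn pbar (Set.Icc 0 1) :=
      isCompact_Icc.uniformContinuousOn_of_continuous hcont
    intro ε hε
    obtain ⟨η, hη, H⟩ := Metric.uniformContinuousOn_iff.mp hu ε hε
    exact ⟨η, hη, fun x hx y hy hd => by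
      simpa [Real.dist_eq] using H x hx y hy (by simpa [Real.dist_eq] using hd)⟩
  have hsel : ∀ ε₁ > (0:ℝ), ∀ η > (0:ℝ), ∃ n : ℕ,
      (∀ x ∈ Set.Icc (0:ℝ) 1, |pbar x - algP c g δ n x| < ε₁) ∧ (1/2:ℝ)^n < η := by
    intro ε₁ hε₁ η hη
    have h1 := Metric.tendstoUniformlyOn_iff.mp hconv ε₁ hε₁
    have h2 : Tendsto (fun j : ℕ => ((1/2:ℝ))^(φ j)) atTop (𝓝 0) :=
      (tendsto_pow_atTop_nhds_zero_of_lt_one (by norm_num) (by norm_num)).comp hφ.tendsto_atTop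
    have h3 : ∀ᶠ j in atTop, ((1/2:ℝ))^(φ j) < η := h2.eventually_lt_const hη
    obtain ⟨j, hj1, hj2⟩ := (h1.and h3).exists
    exact ⟨φ j, fun x hx => by simpa [Real.dist_eq] using hj1 x hx, hj2⟩
  intro s hs
  -- facts about the set S
  have hSbdd0 : ∀ y ∈ {y : ℝ | ∃ k : ℕ, ∃ t : ℝ, 1 ≤ k ∧ 0 ≤ t ∧ t ≤ s ∧
      y = c (s - t) + g k + δ * k * pbar (t / k)}, 0 ≤ y := by
    rintro y ⟨k, t, hk, ht0, hts, rfl⟩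
    have hk1 : (1:ℝ) ≤ k := by exact_mod_cast hk
    have hst : s - t ∈ Set.Icc (0:ℝ) 1 := ⟨by linarith, by linarith [hs.2]⟩
    have htk : t / k ∈ Set.Icc (0:ℝ) 1 :=
      ⟨by positivity, by rw [div_le_one (by linarith)]; nlinarith [hs.2]⟩
    have h1 := c_nonneg hc_mono hc0 _ hst
    have h2 := hg_nonneg k hk
    have h3 : (0:ℝ) ≤ δ * k * pbar (t / k) :=
      mul_nonneg (mul_nonneg hδ0.le (by positivity)) (hpbar_mem _ htk).1
    linarith
  have hSmem : c s ∈ {y : ℝ | ∃ k : ℕ, ∃ t : ℝ, 1 ≤ k ∧ 0 ≤ t ∧ t ≤ s ∧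
      y = c (s - t) + g k + δ * k * pbar (t / k)} := by
    refine ⟨1, 0, le_rfl, le_rfl, hs.1, ?_⟩
    norm_num [hg1, hpb0]
  have hTle : Tmap c g δ pbar s ≤ c s := csInf_le ⟨0, hSbdd0⟩ hSmem
  have hTge : 0 ≤ Tmap c g δ pbar s := le_csInf ⟨_, hSmem⟩ hSbdd0
  rcases eq_or_lt_of_le hs.1 with rfl | hspos
  · rw [hpb0]
    rw [hc0] at hTle
    linarith
  · refine le_antisymm ?_ ?_
    · -- Tmap ≤ pbar s
      refine le_of_forall_pos_le_add' ?_
      intro ε hε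
      set B := δ * ((K:ℝ) + 1) + 1 with hBdef
      have hB0 : 0 < B := by positivity
      set ε₁ := min (ε / (B + 6)) 1 with hε₁def
      have hε₁ : 0 < ε₁ := lt_min (by positivity) one_pos
      have hε₁1 : ε₁ ≤ 1 := min_le_right _ _
      have hε₁ε : (B + 5) * ε₁ ≤ ε := by
        have h1 : ε₁ ≤ ε / (B + 6) := min_le_left _ _
        have h2 : (B + 5) * ε₁ ≤ (B + 5) * (ε / (B + 6)) :=
          mul_le_mul_of_nonneg_left h1 (by linarith only [hB0])
        have h3 : (B + 5) * (ε / (B + 6)) ≤ ε := by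
          rw [mul_comm, div_mul_eq_mul_div, div_le_iff₀ (by linarith only [hB0])]
          nlinarith only [hε, hB0]
        exact le_trans h2 h3
      obtain ⟨ηc, hηc0, hηc⟩ := hcU ε₁ hε₁
      obtain ⟨ηp, hηp0, hηp⟩ := hpU ε₁ hε₁
      obtain ⟨n, hdist, hsmall⟩ := hsel ε₁ hε₁ (min ηc (min ηp s)) (by positivity)
      set h := (1/2:ℝ)^n with hhdef
      have hhpos : 0 < h := by positivity
      have hhc : h < ηc := lt_of_lt_of_le hsmall (min_le_left _ _)
      have hhp : h < ηp := lt_of_lt_of_le hsmall ((min_le_right _ _).trans (min_le_left _ _))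
      have hhs : h < s := lt_of_lt_of_le hsmall ((min_le_right _ _).trans (min_le_right _ _))
      set m := ⌊s / h⌋₊ with hmdef
      have hm1 : 1 ≤ m := Nat.le_floor (by
        rw [Nat.cast_one, le_div_iff₀ hhpos]; linarith only [hhs])
      have hmle : (m:ℝ) * h ≤ s := by
        have h1 := Nat.floor_le (show (0:ℝ) ≤ s / h by positivity)
        calc (m:ℝ) * h ≤ (s/h) * h := by rw [hmdef]; nlinarith only [h1, hhpos]
          _ = s := by field_simp
      have hslt : s < ((m:ℝ) + 1) * h := by
        have h1 := Nat.lt_floor_add_one (s / h)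
        calc s = (s/h) * h := by field_simp
          _ < ((m:ℝ) + 1) * h := by rw [hmdef]; nlinarith only [h1, hhpos]
      have hmh1 : (m:ℝ) * h ≤ 1 := hmle.trans hs.2
      obtain ⟨j, hj⟩ : ∃ j : ℕ, m = j + 1 := ⟨m - 1, by omega⟩
      have hjm : ((j:ℝ) + 1) = (m:ℝ) := by rw [hj]; push_cast; ring
      have hjs : ((j:ℝ) + 1) * h ≤ s := by rw [hjm]; exact hmle
      have hjh1 : ((j:ℝ) + 1) * h ≤ 1 := by rw [hjm]; exact hmh1
      have hrec : algP c g δ n (((j:ℝ) + 1) * h) =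
          sInf {y : ℝ | ∃ k : ℕ, ∃ t : ℝ, 1 ≤ k ∧ 0 ≤ t ∧ t ≤ (j:ℝ) * h ∧
            y = c (((j:ℝ) + 1) * h - t) + g k + δ * k * algP c g δ n (t / (k:ℝ))} :=
        algP_grid n j
      have hS'bdd0 : ∀ y ∈ {y : ℝ | ∃ k : ℕ, ∃ t : ℝ, 1 ≤ k ∧ 0 ≤ t ∧ t ≤ (j:ℝ) * h ∧
          y = c (((j:ℝ) + 1) * h - t) + g k + δ * k * algP c g δ n (t / (k:ℝ))}, 0 ≤ y := by
        rintro y ⟨k, t, hk, ht0, htj, rfl⟩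
        have hk1 : (1:ℝ) ≤ k := by exact_mod_cast hk
        have harg : ((j:ℝ) + 1) * h - t ∈ Set.Icc (0:ℝ) 1 :=
          ⟨by nlinarith only [htj, hhpos], by nlinarith only [ht0, hjs, hs.2]⟩
        have htk : t / (k:ℝ) ∈ Set.Icc (0:ℝ) 1 := ⟨div_nonneg ht0 (by positivity), by
          rw [div_le_one (by linarith only [hk1])]
          nlinarith only [htj, hjs, hs.2, hk1, hhpos]⟩
        have h1 := c_nonneg hc_mono hc0 _ harg
        have h2 := hg_nonneg k hk
        have h3 : (0:ℝ) ≤ δ * k * algP c g δ n (t / (k:ℝ)) :=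
          mul_nonneg (mul_nonneg hδ0.le (by positivity)) (hPb n _ htk).1
        linarith only [h1, h2, h3]
      obtain ⟨y, hyS, hylt⟩ := Real.lt_sInf_add_pos
        (⟨_, 1, 0, le_rfl, le_rfl, by positivity, rfl⟩ : Set.Nonempty
          {y : ℝ | ∃ k : ℕ, ∃ t : ℝ, 1 ≤ k ∧ 0 ≤ t ∧ t ≤ (j:ℝ) * h ∧
            y = c (((j:ℝ) + 1) * h - t) + g k + δ * k * algP c g δ n (t / (k:ℝ))}) hε₁
      rw [← hrec] at hylt
      obtain ⟨k₀, t₀, hk₀, ht₀0, ht₀j, rfl⟩ := hyS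
      have hk₀1 : (1:ℝ) ≤ (k₀:ℝ) := by exact_mod_cast hk₀
      have hPmh := hPb n (((j:ℝ) + 1) * h) ⟨by positivity, hjh1⟩
      have hcarg : ((j:ℝ) + 1) * h - t₀ ∈ Set.Icc (0:ℝ) 1 :=
        ⟨by nlinarith only [ht₀j, hhpos], by nlinarith only [ht₀0, hjs, hs.2]⟩
      have htk₀ : t₀ / (k₀:ℝ) ∈ Set.Icc (0:ℝ) 1 := ⟨div_nonneg ht₀0 (by positivity), by
        rw [div_le_one (by linarith only [hk₀1])]
        nlinarith only [ht₀j, hjs, hs.2, hk₀1, hhpos]⟩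
      have hyge : g k₀ ≤ c (((j:ℝ) + 1) * h - t₀) + g k₀ +
          δ * k₀ * algP c g δ n (t₀ / (k₀:ℝ)) := by
        have h1 := c_nonneg hc_mono hc0 _ hcarg
        have h3 : (0:ℝ) ≤ δ * k₀ * algP c g δ n (t₀ / (k₀:ℝ)) :=
          mul_nonneg (mul_nonneg hδ0.le (by positivity)) (hPb n _ htk₀).1
        linarith only [h1, h3]
      have hk₀K : k₀ < K := by
        by_contra hcon
        push_neg at hcon
        have hgK := hK k₀ hcon
        linarith only [hgK, hyge, hylt, hPmh.2, hε₁1]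
      have hδk : δ * (k₀:ℝ) ≤ B := by
        have hkK : (k₀:ℝ) ≤ (K:ℝ) := by exact_mod_cast hk₀K.le
        rw [hBdef]; nlinarith only [hkK, hδ0]
      have ht₀s : t₀ ≤ s := by nlinarith only [ht₀j, hjs, hhpos]
      have hTz : Tmap c g δ pbar s ≤ c (s - t₀) + g k₀ + δ * k₀ * pbar (t₀ / (k₀:ℝ)) :=
        csInf_le ⟨0, hSbdd0⟩ ⟨k₀, t₀, hk₀, ht₀0, ht₀s, rfl⟩
      have e1 : |c (s - t₀) - c (((j:ℝ) + 1) * h - t₀)| < ε₁ := by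
        refine hηc _ ⟨by linarith only [ht₀0, ht₀s], by linarith only [ht₀0, hs.2]⟩ _ hcarg ?_
        have heq : s - t₀ - (((j:ℝ) + 1) * h - t₀) = s - ((j:ℝ) + 1) * h := by ring
        rw [heq, abs_of_nonneg (by linarith only [hjs])]
        have hlt : s - ((j:ℝ) + 1) * h < h := by rw [hjm]; nlinarith only [hslt]
        linarith only [hlt, hhc]
      have e2 := abs_lt.mp (hdist _ htk₀)
      have e3 := abs_lt.mp (hdist (((j:ℝ) + 1) * h) ⟨by positivity, hjh1⟩)
      have e4 : |pbar (((j:ℝ) + 1) * h) - pbar s| < ε₁ := by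
        refine hηp _ ⟨by positivity, hjh1⟩ _ hs ?_
        rw [abs_of_nonpos (by linarith only [hjs])]
        have hlt : s - ((j:ℝ) + 1) * h < h := by rw [hjm]; nlinarith only [hslt]
        linarith only [hlt, hhp]
      have e1' := abs_lt.mp e1
      have e4' := abs_lt.mp e4
      have hmulA : δ * (k₀:ℝ) * (pbar (t₀ / (k₀:ℝ)) - algP c g δ n (t₀ / (k₀:ℝ))) ≤
          δ * (k₀:ℝ) * ε₁ :=
        mul_le_mul_of_nonneg_left (le_of_lt e2.2) (by positivity)
      have hmulC : δ * (k₀:ℝ) * ε₁ ≤ B * ε₁ := mul_le_mul_of_nonneg_right hδk hε₁.le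
      rw [mul_sub] at hmulA
      linarith only [hTz, hylt, e1'.2, e3.1, e4'.2, hmulA, hmulC, hε₁ε, hε₁]
    · -- pbar s ≤ Tmap
      refine le_of_forall_pos_le_add' ?_
      intro ε hε
      set B := δ * ((K:ℝ) + 1) + 1 with hBdef
      have hB0 : 0 < B := by positivity
      set ε₁ := min (ε / (2*B + 6)) 1 with hε₁def
      have hε₁ : 0 < ε₁ := lt_min (by positivity) one_pos
      have hε₁1 : ε₁ ≤ 1 := min_le_right _ _
      have hε₁ε : (2*B + 5) * ε₁ ≤ ε := by
        have h1 : ε₁ ≤ ε / (2*B + 6) := min_le_left _ _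
        have h2 : (2*B + 5) * ε₁ ≤ (2*B + 5) * (ε / (2*B + 6)) :=
          mul_le_mul_of_nonneg_left h1 (by linarith only [hB0])
        have h3 : (2*B + 5) * (ε / (2*B + 6)) ≤ ε := by
          rw [mul_comm, div_mul_eq_mul_div, div_le_iff₀ (by linarith only [hB0])]
          nlinarith only [hε, hB0]
        exact le_trans h2 h3
      obtain ⟨y, hyS, hylt⟩ := Real.lt_sInf_add_pos
        (⟨_, hSmem⟩ : Set.Nonempty {y : ℝ | ∃ k : ℕ, ∃ t : ℝ, 1 ≤ k ∧ 0 ≤ t ∧ t ≤ s ∧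
          y = c (s - t) + g k + δ * k * pbar (t / (k:ℝ))}) hε₁
      have hTS : Tmap c g δ pbar s = sInf {y : ℝ | ∃ k : ℕ, ∃ t : ℝ, 1 ≤ k ∧ 0 ≤ t ∧ t ≤ s ∧
          y = c (s - t) + g k + δ * k * pbar (t / (k:ℝ))} := rfl
      rw [← hTS] at hylt
      obtain ⟨k₀, t₀, hk₀, ht₀0, ht₀s, rfl⟩ := hyS
      have hk₀1 : (1:ℝ) ≤ (k₀:ℝ) := by exact_mod_cast hk₀
      have hst : s - t₀ ∈ Set.Icc (0:ℝ) 1 :=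
        ⟨by linarith only [ht₀0, ht₀s], by linarith only [ht₀0, hs.2]⟩
      have htk₀ : t₀ / (k₀:ℝ) ∈ Set.Icc (0:ℝ) 1 := ⟨div_nonneg ht₀0 (by positivity), by
        rw [div_le_one (by linarith only [hk₀1])]
        linarith only [ht₀s, hs.2, hk₀1]⟩
      have hyge : g k₀ ≤ c (s - t₀) + g k₀ + δ * k₀ * pbar (t₀ / (k₀:ℝ)) := by
        have h1 := c_nonneg hc_mono hc0 _ hst
        have h3 : (0:ℝ) ≤ δ * k₀ * pbar (t₀ / (k₀:ℝ)) :=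
          mul_nonneg (mul_nonneg hδ0.le (by positivity)) (hpbar_mem _ htk₀).1
        linarith only [h1, h3]
      have hk₀K : k₀ < K := by
        by_contra hcon
        push_neg at hcon
        have hgK := hK k₀ hcon
        have hcs : c s ≤ c 1 := c_le_c_one hc_mono _ hs
        linarith only [hgK, hyge, hylt, hTle, hcs, hε₁1]
      have hδk : δ * (k₀:ℝ) ≤ B := by
        have hkK : (k₀:ℝ) ≤ (K:ℝ) := by exact_mod_cast hk₀K.le
        rw [hBdef]; nlinarith only [hkK, hδ0]
      obtain ⟨ηc, hηc0, hηc⟩ := hcU ε₁ hε₁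
      obtain ⟨ηp, hηp0, hηp⟩ := hpU ε₁ hε₁
      obtain ⟨n, hdist, hsmall⟩ := hsel ε₁ hε₁ (min (ηc/2) (min ηp s)) (by positivity)
      set h := (1/2:ℝ)^n with hhdef
      have hhpos : 0 < h := by positivity
      have hhc : 2*h < ηc := by
        have h1 := lt_of_lt_of_le hsmall (min_le_left _ _)
        linarith only [h1]
      have hhp : h < ηp := lt_of_lt_of_le hsmall ((min_le_right _ _).trans (min_le_left _ _))
      have hhs : h < s := lt_of_lt_of_le hsmall ((min_le_right _ _).trans (min_le_right _ _))
      set m := ⌈s / h⌉₊ with hmdef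
      have hm1 : 1 ≤ m := Nat.one_le_ceil_iff.mpr (by positivity)
      have hsle : s ≤ (m:ℝ) * h := by
        have h1 := Nat.le_ceil (s / h)
        calc s = (s/h) * h := by field_simp
          _ ≤ (m:ℝ) * h := by rw [hmdef]; nlinarith only [h1, hhpos]
      have hmlt : (m:ℝ) * h < s + h := by
        have h1 := Nat.ceil_lt_add_one (show (0:ℝ) ≤ s / h by positivity)
        calc (m:ℝ) * h < (s/h + 1) * h := by rw [hmdef]; nlinarith only [h1, hhpos]
          _ = s + h := by field_simp
      have hJ1 : ((2^n : ℕ) : ℝ) * h = 1 := by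
        push_cast
        rw [hhdef, one_div, inv_pow, mul_inv_cancel₀ (by positivity)]
      have hm2 : m ≤ 2^n := by
        rw [hmdef]
        refine Nat.ceil_le.mpr ?_
        rw [div_le_iff₀ hhpos]
        push_cast at hJ1 ⊢
        linarith only [hJ1, hs.2]
      have hmh1 : (m:ℝ) * h ≤ 1 := by
        rw [← hJ1]
        have h1 : (m:ℝ) ≤ ((2^n:ℕ):ℝ) := by exact_mod_cast hm2
        nlinarith only [h1, hhpos]
      obtain ⟨j, hj⟩ : ∃ j : ℕ, m = j + 1 := ⟨m - 1, by omega⟩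
      have hjm : ((j:ℝ) + 1) = (m:ℝ) := by rw [hj]; push_cast; ring
      have hjh1 : ((j:ℝ) + 1) * h ≤ 1 := by rw [hjm]; exact hmh1
      have hsle' : s ≤ ((j:ℝ) + 1) * h := by rw [hjm]; exact hsle
      have hmlt' : ((j:ℝ) + 1) * h < s + h := by rw [hjm]; exact hmlt
      set t' := min t₀ ((j:ℝ) * h) with ht'def
      have ht'0 : 0 ≤ t' := le_min ht₀0 (by positivity)
      have ht'j : t' ≤ (j:ℝ) * h := min_le_right _ _
      have ht'le : t' ≤ t₀ := min_le_left _ _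
      have ht₀m : t₀ ≤ ((j:ℝ) + 1) * h := by linarith only [ht₀s, hsle']
      have hdiff : t₀ - t' ≤ h := by
        rcases min_cases t₀ ((j:ℝ) * h) with ⟨he, _⟩ | ⟨he, _⟩ <;>
          rw [ht'def, he] <;> nlinarith only [ht₀m, hhpos]
      have hrec : algP c g δ n (((j:ℝ) + 1) * h) =
          sInf {y : ℝ | ∃ k : ℕ, ∃ t : ℝ, 1 ≤ k ∧ 0 ≤ t ∧ t ≤ (j:ℝ) * h ∧
            y = c (((j:ℝ) + 1) * h - t) + g k + δ * k * algP c g δ n (t / (k:ℝ))} :=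
        algP_grid n j
      have hS'bdd0 : ∀ y ∈ {y : ℝ | ∃ k : ℕ, ∃ t : ℝ, 1 ≤ k ∧ 0 ≤ t ∧ t ≤ (j:ℝ) * h ∧
          y = c (((j:ℝ) + 1) * h - t) + g k + δ * k * algP c g δ n (t / (k:ℝ))}, 0 ≤ y := by
        rintro y ⟨k, t, hk, ht0, htj, rfl⟩
        have hk1 : (1:ℝ) ≤ k := by exact_mod_cast hk
        have harg : ((j:ℝ) + 1) * h - t ∈ Set.Icc (0:ℝ) 1 :=
          ⟨by nlinarith only [htj, hhpos], by nlinarith only [ht0, hjh1]⟩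
        have htk : t / (k:ℝ) ∈ Set.Icc (0:ℝ) 1 := ⟨div_nonneg ht0 (by positivity), by
          rw [div_le_one (by linarith only [hk1])]
          nlinarith only [htj, hjh1, hk1, hhpos]⟩
        have h1 := c_nonneg hc_mono hc0 _ harg
        have h2 := hg_nonneg k hk
        have h3 : (0:ℝ) ≤ δ * k * algP c g δ n (t / (k:ℝ)) :=
          mul_nonneg (mul_nonneg hδ0.le (by positivity)) (hPb n _ htk).1
        linarith only [h1, h2, h3]
      have hPle : algP c g δ n (((j:ℝ) + 1) * h) ≤
          c (((j:ℝ) + 1) * h - t') + g k₀ + δ * k₀ * algP c g δ n (t' / (k₀:ℝ)) := by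
        rw [hrec]
        exact csInf_le ⟨0, hS'bdd0⟩ ⟨k₀, t', hk₀, ht'0, ht'j, rfl⟩
      have harg1 : ((j:ℝ) + 1) * h - t' ∈ Set.Icc (0:ℝ) 1 :=
        ⟨by nlinarith only [ht'j, hhpos], by nlinarith only [ht'0, hjh1]⟩
      have htk' : t' / (k₀:ℝ) ∈ Set.Icc (0:ℝ) 1 := ⟨div_nonneg ht'0 (by positivity), by
        rw [div_le_one (by linarith only [hk₀1])]
        nlinarith only [ht'j, hjh1, hk₀1, hhpos]⟩
      have hv1 : ((j:ℝ) + 1) * h ∈ Set.Icc (0:ℝ) 1 := ⟨by positivity, hjh1⟩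
      have f1 : |c (((j:ℝ) + 1) * h - t') - c (s - t₀)| < ε₁ := by
        refine hηc _ harg1 _ hst ?_
        have heq : ((j:ℝ) + 1) * h - t' - (s - t₀) = (((j:ℝ)+1)*h - s) + (t₀ - t') := by
          ring
        rw [heq, abs_of_nonneg (by linarith only [hsle', ht'le])]
        linarith only [hmlt', hdiff, hhc]
      have f2 := abs_lt.mp (hdist _ htk')
      have f3 : |pbar (t' / (k₀:ℝ)) - pbar (t₀ / (k₀:ℝ))| < ε₁ := by
        refine hηp _ htk' _ htk₀ ?_
        have heq : t' / (k₀:ℝ) - t₀ / (k₀:ℝ) = -((t₀ - t') / (k₀:ℝ)) := by ring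
        rw [heq, abs_neg, abs_of_nonneg (div_nonneg (by linarith only [ht'le])
          (by positivity))]
        have hq : (t₀ - t') / (k₀:ℝ) ≤ t₀ - t' := by
          rw [div_le_iff₀ (by linarith only [hk₀1])]
          nlinarith only [ht'le, hk₀1]
        linarith only [hq, hdiff, hhp]
      have f4 : |pbar s - pbar (((j:ℝ) + 1) * h)| < ε₁ := by
        refine hηp _ hs _ hv1 ?_
        rw [abs_of_nonpos (by linarith only [hsle'])]
        linarith only [hmlt', hhp]
      have f5 := abs_lt.mp (hdist _ hv1)
      have f1' := abs_lt.mp f1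
      have f3' := abs_lt.mp f3
      have f4' := abs_lt.mp f4
      have hmulA : δ * (k₀:ℝ) * (algP c g δ n (t' / (k₀:ℝ)) - pbar (t' / (k₀:ℝ))) ≤
          δ * (k₀:ℝ) * ε₁ :=
        mul_le_mul_of_nonneg_left (by linarith only [f2.1]) (by positivity)
      have hmulB : δ * (k₀:ℝ) * (pbar (t' / (k₀:ℝ)) - pbar (t₀ / (k₀:ℝ))) ≤
          δ * (k₀:ℝ) * ε₁ :=
        mul_le_mul_of_nonneg_left (le_of_lt f3'.2) (by positivity)
      have hmulC : δ * (k₀:ℝ) * ε₁ ≤ B * ε₁ := mul_le_mul_of_nonneg_right hδk hε₁.le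
      rw [mul_sub] at hmulA hmulB
      linarith only [hylt, hPle, f1'.2, f4'.2, f5.2, hmulA, hmulB, hmulC, hε₁ε, hε₁]
end

section
/- The sequence (p_n) produced by the recursive grid algorithm converges uniformly on [0,1] to p*, the unique fixed point of T in the order interval [u0, v0]. -/
open Set Filter

namespace AlgPAux

lemma floor_le_of_le {x h : ℝ} {j : ℕ} (hh : 0 < h) (hx : x ≤ j * h) : ⌊x / h⌋₊ ≤ j := by
  have : x / h ≤ (j : ℝ) := by rw [div_le_iff₀ hh]; linarith
  calc ⌊x / h⌋₊ ≤ ⌊(j:ℝ)⌋₊ := Nat.floor_le_floor this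
    _ = j := Nat.floor_natCast j

lemma interp_rep (v : ℕ → ℝ) {h x : ℝ} (hh : 0 < h) (hx : 0 ≤ x) :
    ∃ θ : ℝ, 0 ≤ θ ∧ θ < 1 ∧ x = ((⌊x / h⌋₊ : ℝ) + θ) * h ∧
      interp h v x = (1 - θ) * v ⌊x / h⌋₊ + θ * v (⌊x / h⌋₊ + 1) := by
  refine ⟨x / h - ⌊x / h⌋₊, ?_, ?_, ?_, ?_⟩
  · have := Nat.floor_le (div_nonneg hx hh.le); linarith
  · have := Nat.lt_floor_add_one (x / h); linarith
  · field_simp; ring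
  · unfold interp; ring

lemma interp_grid (v : ℕ → ℝ) {h : ℝ} (hh : 0 < h) (j : ℕ) :
    interp h v ((j : ℝ) * h) = v j := by
  unfold interp
  have h1 : (j : ℝ) * h / h = (j : ℝ) := by field_simp
  rw [h1, Nat.floor_natCast]; ring

lemma interp_zero (v : ℕ → ℝ) {h : ℝ} (hh : 0 < h) : interp h v 0 = v 0 := by
  have := interp_grid v hh 0; simpa using this

/-- lower linear bound -/
lemma interp_lower_linear {v : ℕ → ℝ} {a h x : ℝ} {J : ℕ} (hh : 0 < h) (hx0 : 0 ≤ x)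
    (hxJ : x ≤ J * h) (hv : ∀ i ≤ J, a * (i * h) ≤ v i) :
    a * x ≤ interp h v x := by
  obtain ⟨θ, hθ0, hθ1, hxe, he⟩ := interp_rep v hh hx0
  set i := ⌊x / h⌋₊ with hi
  have hiJ : i ≤ J := floor_le_of_le hh hxJ
  rcases eq_or_lt_of_le hθ0 with h0 | h0
  · rw [he, ← h0]
    have hxi : x = i * h := by rw [hxe, ← h0]; ring
    have := hv i hiJ
    rw [hxi]; linarith
  · have hiJ' : i + 1 ≤ J := by
      by_contra hc
      have : i = J := by omega
      rw [this] at hxe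
      nlinarith
    have h1 := hv i (by omega)
    have h2 := hv (i+1) hiJ'
    rw [he, hxe]
    push_cast at h2 ⊢
    nlinarith [mul_le_mul_of_nonneg_left h1 (by linarith : (0:ℝ) ≤ 1 - θ),
      mul_le_mul_of_nonneg_left h2 hθ0]

lemma interp_mono {v : ℕ → ℝ} {h : ℝ} {J : ℕ} (hh : 0 < h)
    (hv : ∀ i, i + 1 ≤ J → v i ≤ v (i + 1)) {x y : ℝ} (hx0 : 0 ≤ x) (hxy : x ≤ y)
    (hyJ : y ≤ J * h) : interp h v x ≤ interp h v y := by
  have hy0 : 0 ≤ y := le_trans hx0 hxy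
  have hvm : ∀ i₁ i₂, i₁ ≤ i₂ → i₂ ≤ J → v i₁ ≤ v i₂ := by
    intro i₁ i₂ hle hJ
    induction i₂ with
    | zero => simp_all
    | succ n ih =>
      rcases Nat.lt_or_ge i₁ (n+1) with hl | hg
      · exact le_trans (ih (by omega) (by omega)) (hv n hJ)
      · have : i₁ = n + 1 := by omega
        rw [this]
  obtain ⟨θ, hθ0, hθ1, hxe, he⟩ := interp_rep v hh hx0
  obtain ⟨θ', hθ'0, hθ'1, hye, he'⟩ := interp_rep v hh hy0
  set i := ⌊x / h⌋₊ with hidef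
  set i' := ⌊y / h⌋₊ with hi'def
  have hii' : i ≤ i' := Nat.floor_le_floor (by gcongr)
  have hi'J : i' ≤ J := floor_le_of_le hh hyJ
  -- useful: if θ' > 0 then i' + 1 ≤ J
  have hkey' : 0 < θ' → i' + 1 ≤ J := by
    intro hp
    by_contra hc
    have : i' = J := by omega
    rw [this] at hye; nlinarith
  rcases Nat.lt_or_ge i i' with hlt | hge
  · -- different cells
    have hi1J : i + 1 ≤ J := by omega
    have b1 : interp h v x ≤ v (i+1) := by
      have := hvm i (i+1) (by omega) hi1J
      rw [he]; nlinarith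
    have b2 : v (i+1) ≤ v i' := hvm (i+1) i' (by omega) hi'J
    have b3 : v i' ≤ interp h v y := by
      rcases eq_or_lt_of_le hθ'0 with h0 | h0
      · rw [he', ← h0]; ring_nf; rfl
      · have := hvm i' (i'+1) (by omega) (hkey' h0)
        rw [he']; nlinarith
    linarith
  · -- same cell
    have hieq : i = i' := by omega
    have hθθ' : θ ≤ θ' := by
      have : ((i:ℝ) + θ) * h ≤ ((i':ℝ) + θ') * h := by rw [← hxe, ← hye]; exact hxy
      rw [hieq] at this
      have := le_of_mul_le_mul_right this hh
      linarith
    rcases eq_or_lt_of_le (le_trans hθ0 hθθ') with h0 | h0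
    · have : θ = 0 := by linarith
      have h2 : θ' = 0 := by linarith
      rw [he, he', hieq, this, h2]
    · have := hvm i' (i'+1) (by omega) (hkey' h0)
      rw [he, he', hieq]; nlinarith

end AlgPAux
namespace AlgPAux2
open AlgPAux

noncomputable def phiF (c : ℝ → ℝ) (y : ℝ) : ℝ := c y - deriv c 0 * y

section CLem
variable {c : ℝ → ℝ}

lemma slope0_mono (hconv : ConvexOn ℝ (Icc (0:ℝ) 1) c) (hc0 : c 0 = 0) :
    ∀ x y : ℝ, 0 < x → x ≤ y → y ≤ 1 → c x * y ≤ c y * x := by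
  intro x y hx hxy hy1
  rcases eq_or_lt_of_le hxy with rfl | hlt
  · ring_nf; exact le_refl _
  · have hs := hconv.slope_mono_adjacent (x := 0) (z := y)
      ⟨le_refl _, by linarith⟩ ⟨by linarith, hy1⟩ hx hlt
    rw [hc0] at hs
    simp only [sub_zero] at hs
    rw [div_le_div_iff₀ (by linarith) (by linarith)] at hs
    nlinarith

lemma c_incr_lower (hconv : ConvexOn ℝ (Icc (0:ℝ) 1) c) (hc0 : c 0 = 0)
    (hsand : ∀ x ∈ Icc (0:ℝ) 1, deriv c 0 * x ≤ c x) :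
    ∀ x y : ℝ, 0 ≤ x → x ≤ y → y ≤ 1 → deriv c 0 * (y - x) ≤ c y - c x := by
  intro x y hx hxy hy1
  rcases eq_or_lt_of_le hx with rfl | hx0
  · rw [hc0]
    have := hsand y ⟨by linarith, hy1⟩; linarith
  rcases eq_or_lt_of_le hxy with rfl | hlt
  · simp
  · have hs := hconv.slope_mono_adjacent (x := 0) (z := y)
      ⟨le_refl _, by linarith⟩ ⟨by linarith, hy1⟩ hx0 hlt
    rw [hc0] at hs
    simp only [sub_zero] at hs
    have h1 : deriv c 0 ≤ c x / x := by
      rw [le_div_iff₀ hx0]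
      have := hsand x ⟨hx, by linarith⟩; linarith
    have h2 : deriv c 0 ≤ (c y - c x) / (y - x) := le_trans h1 hs
    rw [le_div_iff₀ (by linarith)] at h2
    linarith

lemma phi_nonneg (hsand : ∀ x ∈ Icc (0:ℝ) 1, deriv c 0 * x ≤ c x) {y : ℝ}
    (hy : y ∈ Icc (0:ℝ) 1) : 0 ≤ phiF c y := by
  have := hsand y hy; unfold phiF; linarith

lemma phi_mono (hconv : ConvexOn ℝ (Icc (0:ℝ) 1) c) (hc0 : c 0 = 0)
    (hsand : ∀ x ∈ Icc (0:ℝ) 1, deriv c 0 * x ≤ c x) {x y : ℝ}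
    (hx : 0 ≤ x) (hxy : x ≤ y) (hy1 : y ≤ 1) : phiF c x ≤ phiF c y := by
  have := c_incr_lower hconv hc0 hsand x y hx hxy hy1
  unfold phiF; linarith

lemma phi_scale (hconv : ConvexOn ℝ (Icc (0:ℝ) 1) c) (hc0 : c 0 = 0) {K u : ℝ}
    (hK : 1 ≤ K) (hu : 0 < u) (hu1 : u ≤ 1) : K * phiF c (u / K) ≤ phiF c u := by
  have hK0 : 0 < K := by linarith
  have h1 : c (u / K) * u ≤ c u * (u / K) :=
    slope0_mono hconv hc0 (u / K) u (by positivity) (by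
      rw [div_le_iff₀ hK0]; nlinarith) hu1
  have e1 : c (u / K) * u * (K / u) = K * c (u / K) := by field_simp
  have e2 : c u * (u / K) * (K / u) = c u := by field_simp
  have h2 : K * c (u / K) ≤ c u := by
    rw [← e1, ← e2]
    exact mul_le_mul_of_nonneg_right h1 (by positivity)
  have e3 : K * phiF c (u / K) = K * c (u / K) - deriv c 0 * u := by
    unfold phiF; field_simp
  unfold phiF at *
  linarith

lemma phi_ratio_zero (hc0 : c 0 = 0) (hc'0 : 0 < deriv c 0) :
    ∀ ε : ℝ, 0 < ε → ∃ y₀ : ℝ, 0 < y₀ ∧ y₀ ≤ 1 ∧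
      ∀ y : ℝ, 0 ≤ y → y ≤ y₀ → phiF c y ≤ ε * y := by
  intro ε hε
  have hda : DifferentiableAt ℝ c 0 := differentiableAt_of_deriv_ne_zero hc'0.ne'
  have ts : Tendsto (slope c 0) (nhdsWithin 0 {(0:ℝ)}ᶜ) (nhds (deriv c 0)) :=
    hasDerivAt_iff_tendsto_slope.mp hda.hasDerivAt
  have ts' : Tendsto (slope c 0) (nhdsWithin 0 (Ioi (0:ℝ))) (nhds (deriv c 0)) :=
    ts.mono_left (nhdsWithin_mono 0 (fun y hy => ne_of_gt hy))
  obtain ⟨d, hd0, hball⟩ := Metric.tendsto_nhdsWithin_nhds.mp ts' ε hε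
  refine ⟨min (d/2) 1, by positivity, min_le_right _ _, ?_⟩
  intro y hy0 hyle
  rcases eq_or_lt_of_le hy0 with rfl | hy
  · unfold phiF; rw [hc0]; simp
  · have h1 : dist y 0 < d := by
      rw [Real.dist_eq, sub_zero, abs_of_pos hy]
      have := min_le_left (d/2) 1
      linarith
    have h2 := hball (mem_Ioi.mpr hy) h1
    rw [slope_def_field, hc0, sub_zero, sub_zero, Real.dist_eq] at h2
    have h3 : c y / y - deriv c 0 ≤ ε := le_of_lt (lt_of_abs_lt h2)
    unfold phiF
    have h4 : c y = (c y / y) * y := by field_simp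
    nlinarith

end CLem
end AlgPAux2
namespace AlgPAux3
open AlgPAux AlgPAux2

def oSet (c : ℝ → ℝ) (g : ℕ → ℝ) (δ : ℝ) (p : ℝ → ℝ) (S T : ℝ) : Set ℝ :=
  {y : ℝ | ∃ k : ℕ, ∃ t : ℝ, 1 ≤ k ∧ 0 ≤ t ∧ t ≤ T ∧ y = c (S - t) + g k + δ * k * p (t / k)}

lemma Tmap_eq_oSet (c : ℝ → ℝ) (g : ℕ → ℝ) (δ : ℝ) (p : ℝ → ℝ) (s : ℝ) :
    Tmap c g δ p s = sInf (oSet c g δ p s s) := rfl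

lemma oSet_mem {c : ℝ → ℝ} {g : ℕ → ℝ} {δ : ℝ} {p : ℝ → ℝ} {S T : ℝ} {k : ℕ} {t : ℝ}
    (hk : 1 ≤ k) (ht0 : 0 ≤ t) (htT : t ≤ T) :
    c (S - t) + g k + δ * k * p (t / k) ∈ oSet c g δ p S T :=
  ⟨k, t, hk, ht0, htT, rfl⟩

lemma oSet_nonempty {c : ℝ → ℝ} {g : ℕ → ℝ} {δ : ℝ} {p : ℝ → ℝ} {S T : ℝ} (hT0 : 0 ≤ T) :
    (oSet c g δ p S T).Nonempty :=
  ⟨_, oSet_mem (le_refl 1) (le_refl 0) hT0⟩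

section Grid
variable {c : ℝ → ℝ} {g : ℕ → ℝ} {δ : ℝ} {h : ℝ} {p : ℝ → ℝ}

lemma oSet_lower (hδ1 : 1 ≤ δ) (hgn : ∀ k : ℕ, 1 ≤ k → 0 ≤ g k)
    (hsand : ∀ x ∈ Icc (0:ℝ) 1, deriv c 0 * x ≤ c x) (hc'0 : 0 < deriv c 0)
    {S T : ℝ} (hS1 : S ≤ 1) (hT0 : 0 ≤ T) (hTS : T ≤ S)
    (hp : ∀ x : ℝ, 0 ≤ x → x ≤ T → deriv c 0 * x ≤ p x) :
    ∀ y ∈ oSet c g δ p S T, deriv c 0 * S ≤ y := by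
  rintro y ⟨k, t, hk, ht0, htT, rfl⟩
  have hk1 : (1:ℝ) ≤ (k:ℝ) := by exact_mod_cast hk
  have hk0 : (0:ℝ) < (k:ℝ) := by linarith
  have htk : t / k ≤ t := div_le_self ht0 hk1
  have h1 : deriv c 0 * (S - t) ≤ c (S - t) :=
    hsand _ ⟨by linarith, by linarith⟩
  have h2 : deriv c 0 * (t / k) ≤ p (t / k) := hp _ (by positivity) (by linarith)
  have h3 : 0 ≤ g k := hgn k hk
  have h4 : δ * k * (deriv c 0 * (t / k)) ≤ δ * k * p (t / k) :=
    mul_le_mul_of_nonneg_left h2 (by positivity)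
  have h5 : δ * k * (deriv c 0 * (t / k)) = δ * (deriv c 0 * t) := by
    field_simp
  have h6 : deriv c 0 * t ≤ δ * (deriv c 0 * t) := by
    have h7 : 0 ≤ deriv c 0 * t := by positivity
    nlinarith
  nlinarith

lemma oSet_bddBelow (hδ1 : 1 ≤ δ) (hgn : ∀ k : ℕ, 1 ≤ k → 0 ≤ g k)
    (hsand : ∀ x ∈ Icc (0:ℝ) 1, deriv c 0 * x ≤ c x) (hc'0 : 0 < deriv c 0)
    {S T : ℝ} (hS1 : S ≤ 1) (hT0 : 0 ≤ T) (hTS : T ≤ S)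
    (hp : ∀ x : ℝ, 0 ≤ x → x ≤ T → deriv c 0 * x ≤ p x) :
    BddBelow (oSet c g δ p S T) :=
  ⟨deriv c 0 * S, fun y hy => oSet_lower hδ1 hgn hsand hc'0 hS1 hT0 hTS hp y hy⟩

lemma gridVal_zero : gridVal c g δ h 0 = 0 := by rw [gridVal]

lemma interp_cap_eq {v : ℕ → ℝ} {j : ℕ} {x : ℝ} (hh : 0 < h) (hx0 : 0 ≤ x)
    (hxj : x ≤ (j:ℝ) * h) : interp h (fun i => v (min i j)) x = interp h v x := by
  have hij : ⌊x / h⌋₊ ≤ j := floor_le_of_le hh hxj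
  rcases lt_or_eq_of_le hij with hlt | heq
  · unfold interp
    simp only [min_eq_left hij, min_eq_left (by omega : ⌊x / h⌋₊ + 1 ≤ j)]
  · have hge : (j:ℝ) * h ≤ x := by
      have := Nat.floor_le (div_nonneg hx0 hh.le)
      rw [heq] at this
      calc (j:ℝ) * h ≤ x / h * h := by nlinarith
        _ = x := by field_simp
    have hxe : x = (j:ℝ) * h := le_antisymm hxj hge
    have hdiv : x / h = (j:ℝ) := by rw [hxe]; field_simp
    unfold interp
    rw [hdiv, Nat.floor_natCast]
    simp [min_self]

lemma gridVal_succ (hh : 0 < h) (j : ℕ) :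
    gridVal c g δ h (j+1) =
      sInf (oSet c g δ (interp h (gridVal c g δ h)) (((j:ℝ)+1)*h) ((j:ℝ)*h)) := by
  rw [gridVal]
  congr 1
  ext y
  constructor <;> rintro ⟨k, t, hk, ht0, htj, rfl⟩ <;> refine ⟨k, t, hk, ht0, htj, ?_⟩ <;>
  · have hk1 : (1:ℝ) ≤ (k:ℝ) := by exact_mod_cast hk
    have h1 : t / k ≤ (j:ℝ) * h := le_trans (div_le_self ht0 hk1) htj
    rw [interp_cap_eq hh (by positivity) h1]

/-- the sandwich: `c'0 * jh ≤ P j ≤ c jh` -/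
lemma grid_sandwich (hh : 0 < h) (hδ1 : 1 ≤ δ) (hgn : ∀ k : ℕ, 1 ≤ k → 0 ≤ g k)
    (hg1 : g 1 = 0) (hc0 : c 0 = 0)
    (hsand : ∀ x ∈ Icc (0:ℝ) 1, deriv c 0 * x ≤ c x) (hc'0 : 0 < deriv c 0) :
    ∀ j : ℕ, (j:ℝ) * h ≤ 1 →
      deriv c 0 * ((j:ℝ)*h) ≤ gridVal c g δ h j ∧ gridVal c g δ h j ≤ c ((j:ℝ)*h) := by
  intro j
  induction j using Nat.strong_induction_on with
  | _ j IH =>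
    intro hj1
    match j with
    | 0 => simp [gridVal_zero, hc0]
    | Nat.succ j =>
      have hj1' : ((j:ℝ)+1) * h ≤ 1 := by push_cast at hj1; linarith
      have hjh1 : (j:ℝ) * h ≤ 1 := by nlinarith
      have hphlow : ∀ x : ℝ, 0 ≤ x → x ≤ (j:ℝ)*h →
          deriv c 0 * x ≤ interp h (gridVal c g δ h) x := by
        intro x hx0 hxj
        refine interp_lower_linear hh hx0 hxj ?_
        intro i hi
        have hi1 : (i:ℝ) * h ≤ 1 := by
          have : (i:ℝ) ≤ (j:ℝ) := by exact_mod_cast hi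
          nlinarith
        exact (IH i (by omega) hi1).1
      have hT0 : (0:ℝ) ≤ (j:ℝ)*h := by positivity
      have hTS : (j:ℝ)*h ≤ ((j:ℝ)+1)*h := by nlinarith
      rw [gridVal_succ hh]
      constructor
      · push_cast
        exact le_csInf (oSet_nonempty hT0)
          (oSet_lower hδ1 hgn hsand hc'0 hj1' hT0 hTS hphlow)
      · have hmem := oSet_mem (c := c) (g := g) (δ := δ)
          (p := interp h (gridVal c g δ h)) (S := ((j:ℝ)+1)*h) (T := (j:ℝ)*h)
          (le_refl 1) (le_refl 0) hT0
        have hval : c (((j:ℝ)+1)*h - 0) + g 1 + δ * (1:ℕ) * interp h (gridVal c g δ h) (0 / (1:ℕ)) =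
            c (((j:ℝ)+1)*h) := by
          have h0 : ((0:ℝ) / ((1:ℕ):ℝ)) = 0 := by norm_num
          rw [h0, interp_zero _ hh, gridVal_zero, hg1]
          push_cast
          ring_nf
        have := csInf_le (oSet_bddBelow hδ1 hgn hsand hc'0 hj1' hT0 hTS hphlow) hmem
        rw [hval] at this
        push_cast
        exact this
end Grid
end AlgPAux3
namespace AlgPAux3
open AlgPAux AlgPAux2

section Grid2
variable {c : ℝ → ℝ} {g : ℕ → ℝ} {δ : ℝ} {h : ℝ}

lemma ph_lower (hh : 0 < h) (hδ1 : 1 ≤ δ) (hgn : ∀ k : ℕ, 1 ≤ k → 0 ≤ g k)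
    (hg1 : g 1 = 0) (hc0 : c 0 = 0)
    (hsand : ∀ x ∈ Icc (0:ℝ) 1, deriv c 0 * x ≤ c x) (hc'0 : 0 < deriv c 0)
    {J : ℕ} (hJ : (J:ℝ) * h ≤ 1) {x : ℝ} (hx0 : 0 ≤ x) (hxJ : x ≤ (J:ℝ) * h) :
    deriv c 0 * x ≤ interp h (gridVal c g δ h) x := by
  refine interp_lower_linear hh hx0 hxJ ?_
  intro i hi
  have hi1 : (i:ℝ) * h ≤ 1 := by
    have : (i:ℝ) ≤ (J:ℝ) := by exact_mod_cast hi
    nlinarith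
  exact (grid_sandwich hh hδ1 hgn hg1 hc0 hsand hc'0 i hi1).1

lemma ph_nonneg (hh : 0 < h) (hδ1 : 1 ≤ δ) (hgn : ∀ k : ℕ, 1 ≤ k → 0 ≤ g k)
    (hg1 : g 1 = 0) (hc0 : c 0 = 0)
    (hsand : ∀ x ∈ Icc (0:ℝ) 1, deriv c 0 * x ≤ c x) (hc'0 : 0 < deriv c 0)
    {J : ℕ} (hJ : (J:ℝ) * h ≤ 1) {x : ℝ} (hx0 : 0 ≤ x) (hxJ : x ≤ (J:ℝ) * h) :
    0 ≤ interp h (gridVal c g δ h) x :=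
  le_trans (by positivity) (ph_lower hh hδ1 hgn hg1 hc0 hsand hc'0 hJ hx0 hxJ)

lemma grid_mono (hh : 0 < h) (hδ1 : 1 ≤ δ) (hgn : ∀ k : ℕ, 1 ≤ k → 0 ≤ g k)
    (hg1 : g 1 = 0) (hc0 : c 0 = 0)
    (hsand : ∀ x ∈ Icc (0:ℝ) 1, deriv c 0 * x ≤ c x) (hc'0 : 0 < deriv c 0)
    (hcmono : MonotoneOn c (Icc (0:ℝ) 1)) :
    ∀ j : ℕ, ((j:ℝ)+1) * h ≤ 1 → gridVal c g δ h j ≤ gridVal c g δ h (j+1) := by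
  intro j
  induction j using Nat.strong_induction_on with
  | _ j IH =>
    intro hj1
    match j with
    | 0 =>
      have hs := (grid_sandwich hh hδ1 hgn hg1 hc0 hsand hc'0 1
        (by push_cast at hj1 ⊢; linarith)).1
      have hpos : (0:ℝ) ≤ deriv c 0 * (((1:ℕ):ℝ) * h) := by positivity
      rw [gridVal_zero]; linarith
    | Nat.succ j' =>
      have hj1' : ((j':ℝ)+2) * h ≤ 1 := by push_cast at hj1; linarith
      have hj1'' : ((j':ℝ)+1) * h ≤ 1 := by nlinarith
      have hjh1 : (j':ℝ) * h ≤ 1 := by nlinarith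
      have hT0 : (0:ℝ) ≤ (j':ℝ) * h := by positivity
      have hT0' : (0:ℝ) ≤ ((j':ℝ)+1) * h := by positivity
      -- pointwise monotonicity of interpolant on [0, (j'+1)h]
      have hv : ∀ i : ℕ, i + 1 ≤ j' + 1 → gridVal c g δ h i ≤ gridVal c g δ h (i+1) := by
        intro i hi
        refine IH i (by omega) ?_
        have : (i:ℝ) + 1 ≤ (j':ℝ) + 1 := by exact_mod_cast hi
        nlinarith
      have phmono : ∀ x y : ℝ, 0 ≤ x → x ≤ y → y ≤ ((j':ℝ)+1)*h →
          interp h (gridVal c g δ h) x ≤ interp h (gridVal c g δ h) y := by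
        intro x y hx0 hxy hyJ
        refine interp_mono (J := j'+1) hh hv hx0 hxy (by push_cast; linarith)
      have hphlow : ∀ x : ℝ, 0 ≤ x → x ≤ ((j':ℝ)+1)*h →
          deriv c 0 * x ≤ interp h (gridVal c g δ h) x := by
        intro x hx0 hxJ
        exact ph_lower hh hδ1 hgn hg1 hc0 hsand hc'0 (J := j'+1)
          (by push_cast; linarith) hx0 (by push_cast; linarith)
      have hphlow' : ∀ x : ℝ, 0 ≤ x → x ≤ (j':ℝ)*h →
          deriv c 0 * x ≤ interp h (gridVal c g δ h) x := by
        intro x hx0 hxJ; exact hphlow x hx0 (by nlinarith)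
      have hbdd' := oSet_bddBelow (p := interp h (gridVal c g δ h)) hδ1 hgn hsand hc'0
          (S := ((j':ℝ)+1)*h) (T := (j':ℝ)*h) hj1'' hT0 (by nlinarith) hphlow'
      rw [gridVal_succ hh (j := j'+1), gridVal_succ hh (j := j')]
      refine le_csInf (oSet_nonempty (by push_cast; positivity)) ?_
      rintro y ⟨k, t, hk, ht0, htT, rfl⟩
      push_cast at htT
      have hk1 : (1:ℝ) ≤ (k:ℝ) := by exact_mod_cast hk
      have hkpos : (0:ℝ) < (k:ℝ) := by linarith
      have htk0 : 0 ≤ t / (k:ℝ) := by positivity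
      have htkt : t / (k:ℝ) ≤ t := div_le_self ht0 hk1
      by_cases hcase1 : t ≤ (j':ℝ) * h
      · have hle := csInf_le hbdd' (oSet_mem (p := interp h (gridVal c g δ h))
          (S := ((j':ℝ)+1)*h) hk ht0 hcase1)
        have hcm : c (((j':ℝ)+1)*h - t) ≤ c ((((j'+1:ℕ):ℝ)+1)*h - t) := by
          refine hcmono ⟨by linarith, by nlinarith⟩ ⟨by push_cast; linarith, by push_cast; linarith⟩ ?_
          push_cast; nlinarith
        linarith
      · push_neg at hcase1
        by_cases hcase2 : h ≤ t
        · have ht'0 : 0 ≤ t - h := by linarith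
          have ht'T : t - h ≤ (j':ℝ) * h := by linarith
          have hle := csInf_le hbdd' (oSet_mem (p := interp h (gridVal c g δ h))
            (S := ((j':ℝ)+1)*h) hk ht'0 ht'T)
          have harg : ((j':ℝ)+1)*h - (t - h) = (((j'+1:ℕ):ℝ)+1)*h - t := by push_cast; ring
          rw [harg] at hle
          have hphm : interp h (gridVal c g δ h) ((t-h)/(k:ℝ)) ≤
              interp h (gridVal c g δ h) (t/(k:ℝ)) := by
            refine phmono _ _ (by positivity) (by gcongr <;> linarith) (by linarith)
          have : δ * (k:ℝ) * interp h (gridVal c g δ h) ((t-h)/(k:ℝ)) ≤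
              δ * (k:ℝ) * interp h (gridVal c g δ h) (t/(k:ℝ)) := by
            refine mul_le_mul_of_nonneg_left hphm (by positivity)
          linarith
        · push_neg at hcase2
          have hle := csInf_le hbdd' (oSet_mem (p := interp h (gridVal c g δ h))
            (S := ((j':ℝ)+1)*h) hk (le_refl (0:ℝ)) hT0)
          have hz : (0:ℝ) / (k:ℝ) = 0 := by simp
          rw [hz, interp_zero _ hh, gridVal_zero] at hle
          have hcm : c (((j':ℝ)+1)*h - 0) ≤ c ((((j'+1:ℕ):ℝ)+1)*h - t) := by
            refine hcmono ⟨by linarith, by nlinarith⟩ ⟨by push_cast; linarith, by push_cast; linarith⟩ ?_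
            push_cast; nlinarith
          have hpnn : 0 ≤ δ * (k:ℝ) * interp h (gridVal c g δ h) (t/(k:ℝ)) := by
            have := ph_nonneg hh hδ1 hgn hg1 hc0 hsand hc'0 (J := j'+1)
              (by push_cast; linarith) htk0 (by push_cast; linarith)
            positivity
          linarith

lemma grid_increment (hh : 0 < h) (hδ1 : 1 ≤ δ) (hgn : ∀ k : ℕ, 1 ≤ k → 0 ≤ g k)
    (hg1 : g 1 = 0) (hc0 : c 0 = 0)
    (hsand : ∀ x ∈ Icc (0:ℝ) 1, deriv c 0 * x ≤ c x) (hc'0 : 0 < deriv c 0)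
    {W : ℝ}
    (hWc : ∀ x ∈ Icc (0:ℝ) 1, ∀ y ∈ Icc (0:ℝ) 1, |x - y| ≤ h → |c x - c y| ≤ W) :
    ∀ j : ℕ, ((j:ℝ)+1) * h ≤ 1 → gridVal c g δ h (j+1) ≤ gridVal c g δ h j + W := by
  intro j hj1
  match j with
  | 0 =>
    have hs := (grid_sandwich hh hδ1 hgn hg1 hc0 hsand hc'0 1
      (by push_cast at hj1 ⊢; linarith)).2
    have hW : |c (((1:ℕ):ℝ)*h) - c 0| ≤ W := by
      refine hWc _ ⟨by push_cast; positivity, by push_cast at hj1 ⊢; linarith⟩ _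
        ⟨le_refl _, by linarith⟩ ?_
      push_cast
      rw [abs_of_nonneg (by linarith)]
      linarith
    rw [gridVal_zero, hc0] at *
    have := le_abs_self (c (((1:ℕ):ℝ)*h) - 0)
    linarith
  | Nat.succ j' =>
    have hj2 : ((j':ℝ)+2) * h ≤ 1 := by push_cast at hj1; linarith
    have hj1'' : ((j':ℝ)+1) * h ≤ 1 := by nlinarith
    have hT0 : (0:ℝ) ≤ (j':ℝ) * h := by positivity
    have hT0' : (0:ℝ) ≤ ((j':ℝ)+1) * h := by positivity
    have hphlow : ∀ x : ℝ, 0 ≤ x → x ≤ ((j':ℝ)+1)*h →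
        deriv c 0 * x ≤ interp h (gridVal c g δ h) x := fun x hx0 hxJ =>
      ph_lower hh hδ1 hgn hg1 hc0 hsand hc'0 (J := j'+1)
        (by push_cast; linarith) hx0 (by push_cast; linarith)
    have hbdd := oSet_bddBelow (p := interp h (gridVal c g δ h)) hδ1 hgn hsand hc'0
        (S := (((j'+1:ℕ):ℝ)+1)*h) (T := ((j'+1:ℕ):ℝ)*h) (by push_cast; linarith)
        (by push_cast; positivity) (by push_cast; nlinarith)
        (by push_cast; exact hphlow)
    rw [gridVal_succ hh (j := j'+1), gridVal_succ hh (j := j')]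
    have key : ∀ y ∈ oSet c g δ (interp h (gridVal c g δ h)) (((j':ℝ)+1)*h) ((j':ℝ)*h),
        sInf (oSet c g δ (interp h (gridVal c g δ h)) ((((j'+1:ℕ):ℝ)+1)*h) (((j'+1:ℕ):ℝ)*h)) - W ≤ y := by
      rintro y ⟨k, t, hk, ht0, htT, rfl⟩
      have hle := csInf_le hbdd (oSet_mem (p := interp h (gridVal c g δ h))
        (S := (((j'+1:ℕ):ℝ)+1)*h) hk ht0 (by push_cast; nlinarith))
      have hW : c ((((j'+1:ℕ):ℝ)+1)*h - t) ≤ c (((j':ℝ)+1)*h - t) + W := by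
        have := hWc ((((j'+1:ℕ):ℝ)+1)*h - t) ⟨by push_cast; nlinarith, by push_cast; linarith⟩
          (((j':ℝ)+1)*h - t) ⟨by nlinarith, by nlinarith⟩ (by push_cast; rw [abs_of_nonneg (by nlinarith)]; nlinarith)
        have h2 := le_abs_self (c ((((j'+1:ℕ):ℝ)+1)*h - t) - c (((j':ℝ)+1)*h - t))
        linarith
      linarith
    have h2 := le_csInf (oSet_nonempty hT0) key
    linarith
end Grid2
end AlgPAux3
namespace AlgPAux4
open AlgPAux AlgPAux2 AlgPAux3

noncomputable def Bnd (c : ℝ → ℝ) (δ S : ℝ) (m : ℕ) (V : ℝ) : ℝ :=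
  δ^m * phiF c (min ((V + S)/(δ^m * deriv c 0)) 1) + S

section S4
variable {c : ℝ → ℝ} {g : ℕ → ℝ} {δ : ℝ} {h : ℝ} {pstar : ℝ → ℝ}

lemma Bnd_mono (hconv : ConvexOn ℝ (Icc (0:ℝ) 1) c) (hc0 : c 0 = 0)
    (hsand : ∀ x ∈ Icc (0:ℝ) 1, deriv c 0 * x ≤ c x) (hc'0 : 0 < deriv c 0)
    (hδpos : 0 < δ) {S : ℝ} (hS : 0 ≤ S) (m : ℕ) {a b : ℝ} (ha : 0 ≤ a) (hab : a ≤ b) :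
    Bnd c δ S m a ≤ Bnd c δ S m b := by
  unfold Bnd
  have hp : (0:ℝ) < δ^m := by positivity
  have h1 : (0:ℝ) ≤ min ((a + S)/(δ^m * deriv c 0)) 1 :=
    le_min (by positivity) (by norm_num)
  have h2 : min ((a + S)/(δ^m * deriv c 0)) 1 ≤ min ((b + S)/(δ^m * deriv c 0)) 1 := by
    refine min_le_min ?_ (le_refl 1)
    gcongr
  have h3 := phi_mono hconv hc0 hsand h1 h2 (min_le_right _ 1)
  nlinarith

lemma Bnd_nonneg (hsand : ∀ x ∈ Icc (0:ℝ) 1, deriv c 0 * x ≤ c x) (hc'0 : 0 < deriv c 0)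
    (hδpos : 0 < δ) {S : ℝ} (hS : 0 ≤ S) (m : ℕ) {a : ℝ} (ha : 0 ≤ a) :
    0 ≤ Bnd c δ S m a := by
  unfold Bnd
  have hp : (0:ℝ) < δ^m := by positivity
  have h1 : (0:ℝ) ≤ min ((a + S)/(δ^m * deriv c 0)) 1 :=
    le_min (by positivity) (by norm_num)
  have h3 := phi_nonneg hsand (y := min ((a + S)/(δ^m * deriv c 0)) 1)
    ⟨h1, min_le_right _ 1⟩
  nlinarith

lemma oSet_lower0 (hδpos : 0 < δ) (hgn : ∀ k : ℕ, 1 ≤ k → 0 ≤ g k)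
    (hcnn : ∀ x ∈ Icc (0:ℝ) 1, 0 ≤ c x) {p : ℝ → ℝ} {S T : ℝ} (hS1 : S ≤ 1) (hTS : T ≤ S)
    (hp : ∀ x : ℝ, 0 ≤ x → x ≤ T → 0 ≤ p x) :
    ∀ y ∈ oSet c g δ p S T, (0:ℝ) ≤ y := by
  rintro y ⟨k, t, hk, ht0, htT, rfl⟩
  have hk1 : (1:ℝ) ≤ (k:ℝ) := by exact_mod_cast hk
  have htk : t / k ≤ t := div_le_self ht0 hk1
  have h1 : 0 ≤ c (S - t) := hcnn _ ⟨by linarith, by linarith⟩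
  have h2 : 0 ≤ p (t / k) := hp _ (by positivity) (by linarith)
  have h3 : 0 ≤ g k := hgn k hk
  have h4 : 0 ≤ δ * k * p (t / k) := by positivity
  linarith

lemma pstar_le_opt (hδpos : 0 < δ) (hgn : ∀ k : ℕ, 1 ≤ k → 0 ≤ g k)
    (hcnn : ∀ x ∈ Icc (0:ℝ) 1, 0 ≤ c x)
    (hpnn : ∀ x : ℝ, 0 ≤ x → x ≤ 1 → 0 ≤ pstar x)
    (hp_fix : ∀ s ∈ Icc (0:ℝ) 1, Tmap c g δ pstar s = pstar s)
    {s : ℝ} (hs : s ∈ Icc (0:ℝ) 1) {k : ℕ} {t : ℝ} (hk : 1 ≤ k) (ht0 : 0 ≤ t) (hts : t ≤ s) :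
    pstar s ≤ c (s - t) + g k + δ * k * pstar (t / k) := by
  rw [← hp_fix s hs, Tmap_eq_oSet]
  refine csInf_le ⟨0, fun y hy => ?_⟩ (oSet_mem hk ht0 hts)
  exact oSet_lower0 hδpos hgn hcnn hs.2 (le_refl s) (fun x hx0 hxT => hpnn x hx0 (by linarith [hs.2])) y hy

lemma pstar_nearopt (hδpos : 0 < δ) (hgn : ∀ k : ℕ, 1 ≤ k → 0 ≤ g k)
    (hcnn : ∀ x ∈ Icc (0:ℝ) 1, 0 ≤ c x)
    (hpnn : ∀ x : ℝ, 0 ≤ x → x ≤ 1 → 0 ≤ pstar x)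
    (hp_fix : ∀ s ∈ Icc (0:ℝ) 1, Tmap c g δ pstar s = pstar s)
    {s : ℝ} (hs : s ∈ Icc (0:ℝ) 1) {ν : ℝ} (hν : 0 < ν) :
    ∃ (k : ℕ) (t : ℝ), 1 ≤ k ∧ 0 ≤ t ∧ t ≤ s ∧
      c (s - t) + g k + δ * k * pstar (t / k) < pstar s + ν := by
  have hbdd : BddBelow (oSet c g δ pstar s s) := ⟨0, fun y hy =>
    oSet_lower0 hδpos hgn hcnn hs.2 (le_refl s)
      (fun x hx0 hxT => hpnn x hx0 (by linarith [hs.2])) y hy⟩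
  have hne : (oSet c g δ pstar s s).Nonempty := oSet_nonempty hs.1
  have hlt : sInf (oSet c g δ pstar s s) < pstar s + ν := by
    rw [← Tmap_eq_oSet, hp_fix s hs]; linarith
  obtain ⟨y, ⟨k, t, hk, ht0, hts, rfl⟩, hylt⟩ := (csInf_lt_iff hbdd hne).mp hlt
  exact ⟨k, t, hk, ht0, hts, hylt⟩

lemma grid_nearopt (hh : 0 < h) (hδ1 : 1 ≤ δ) (hgn : ∀ k : ℕ, 1 ≤ k → 0 ≤ g k)
    (hg1 : g 1 = 0) (hc0 : c 0 = 0)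
    (hsand : ∀ x ∈ Icc (0:ℝ) 1, deriv c 0 * x ≤ c x) (hc'0 : 0 < deriv c 0)
    {j : ℕ} (hj1 : ((j:ℝ)+1) * h ≤ 1) {ν : ℝ} (hν : 0 < ν) :
    ∃ (k : ℕ) (t : ℝ), 1 ≤ k ∧ 0 ≤ t ∧ t ≤ (j:ℝ)*h ∧
      c (((j:ℝ)+1)*h - t) + g k + δ * k * interp h (gridVal c g δ h) (t / k) <
        gridVal c g δ h (j+1) + ν := by
  have hT0 : (0:ℝ) ≤ (j:ℝ)*h := by positivity
  have hphlow : ∀ x : ℝ, 0 ≤ x → x ≤ (j:ℝ)*h →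
      deriv c 0 * x ≤ interp h (gridVal c g δ h) x := fun x hx0 hxJ =>
    ph_lower hh hδ1 hgn hg1 hc0 hsand hc'0 (J := j) (by nlinarith) hx0 hxJ
  have hbdd := oSet_bddBelow (p := interp h (gridVal c g δ h)) hδ1 hgn hsand hc'0
      (S := ((j:ℝ)+1)*h) (T := (j:ℝ)*h) hj1 hT0 (by nlinarith) hphlow
  have hne : (oSet c g δ (interp h (gridVal c g δ h)) (((j:ℝ)+1)*h) ((j:ℝ)*h)).Nonempty :=
    oSet_nonempty hT0
  have hlt : sInf (oSet c g δ (interp h (gridVal c g δ h)) (((j:ℝ)+1)*h) ((j:ℝ)*h)) <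
      gridVal c g δ h (j+1) + ν := by
    rw [← gridVal_succ hh]; linarith
  obtain ⟨y, ⟨k, t, hk, ht0, hts, rfl⟩, hylt⟩ := (csInf_lt_iff hbdd hne).mp hlt
  exact ⟨k, t, hk, ht0, hts, hylt⟩

end S4
end AlgPAux4
namespace AlgPAux4
open AlgPAux AlgPAux2 AlgPAux3

section S5
variable {c : ℝ → ℝ} {g : ℕ → ℝ} {δ : ℝ} {h : ℝ} {pstar : ℝ → ℝ}

/-- interpolant exceeds pstar by at most grid excess -/
lemma subA (hh : 0 < h) (hδ1 : 1 ≤ δ)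
    (hconv : ConvexOn ℝ (Icc (0:ℝ) 1) c) (hc0 : c 0 = 0)
    (hsand : ∀ x ∈ Icc (0:ℝ) 1, deriv c 0 * x ≤ c x) (hc'0 : 0 < deriv c 0)
    (hpnn : ∀ x : ℝ, 0 ≤ x → x ≤ 1 → 0 ≤ pstar x)
    {ω : ℝ} (hω0 : 0 ≤ ω)
    (hωp : ∀ x ∈ Icc (0:ℝ) 1, ∀ y ∈ Icc (0:ℝ) 1, |x - y| ≤ h → |pstar x - pstar y| ≤ ω)
    {S : ℝ} (hS : 0 ≤ S) (m : ℕ)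
    (IHU : ∀ j : ℕ, (j:ℝ) * h ≤ 1 →
      gridVal c g δ h j - pstar ((j:ℝ)*h) ≤ Bnd c δ S m (pstar ((j:ℝ)*h))) :
    ∀ x : ℝ, 0 ≤ x → x + h ≤ 1 →
      interp h (gridVal c g δ h) x ≤ pstar x + ω + Bnd c δ S m (pstar x + ω) := by
  intro x hx0 hx1
  obtain ⟨θ, hθ0, hθ1, hxe, he⟩ := interp_rep (gridVal c g δ h) hh hx0
  set i := ⌊x / h⌋₊ with hidef
  have hih : (i:ℝ)*h ≤ x := by nlinarith [hxe]
  have hih0 : (0:ℝ) ≤ (i:ℝ)*h := by positivity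
  have hi1h : ((i:ℝ)+1)*h ≤ 1 := by nlinarith [hxe]
  have hx' : x ≤ 1 := by linarith
  have hc1 := IHU i (by nlinarith)
  have hc2 := IHU (i+1) (by push_cast; nlinarith)
  push_cast at hc2
  have habs1 : |(i:ℝ)*h - x| ≤ h := by
    rw [hxe]; rw [abs_of_nonpos (by nlinarith)]; nlinarith
  have habs2 : |((i:ℝ)+1)*h - x| ≤ h := by
    rw [hxe]; rw [abs_of_nonneg (by nlinarith)]; nlinarith
  have hωi : pstar ((i:ℝ)*h) ≤ pstar x + ω := by
    have := hωp ((i:ℝ)*h) ⟨hih0, by linarith⟩ x ⟨hx0, hx'⟩ habs1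
    have h2 := le_abs_self (pstar ((i:ℝ)*h) - pstar x)
    linarith
  have hωi1 : pstar (((i:ℝ)+1)*h) ≤ pstar x + ω := by
    have := hωp (((i:ℝ)+1)*h) ⟨by positivity, hi1h⟩ x ⟨hx0, hx'⟩ habs2
    have h2 := le_abs_self (pstar (((i:ℝ)+1)*h) - pstar x)
    linarith
  have hδpos : (0:ℝ) < δ := by linarith
  have hBm1 : Bnd c δ S m (pstar ((i:ℝ)*h)) ≤ Bnd c δ S m (pstar x + ω) :=
    Bnd_mono hconv hc0 hsand hc'0 hδpos hS m (hpnn _ hih0 (by linarith)) hωi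
  have hBm2 : Bnd c δ S m (pstar (((i:ℝ)+1)*h)) ≤ Bnd c δ S m (pstar x + ω) :=
    Bnd_mono hconv hc0 hsand hc'0 hδpos hS m (hpnn _ (by positivity) hi1h) hωi1
  have hb1 : gridVal c g δ h i ≤ pstar x + ω + Bnd c δ S m (pstar x + ω) := by linarith
  have hb2 : gridVal c g δ h (i+1) ≤ pstar x + ω + Bnd c δ S m (pstar x + ω) := by linarith
  rw [he]
  nlinarith [mul_le_mul_of_nonneg_left hb1 (by linarith : (0:ℝ) ≤ 1 - θ),
    mul_le_mul_of_nonneg_left hb2 hθ0]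

/-- pstar exceeds interpolant by at most grid deficiency -/
lemma subB (hh : 0 < h) (hδ1 : 1 ≤ δ) (hgn : ∀ k : ℕ, 1 ≤ k → 0 ≤ g k)
    (hg1 : g 1 = 0)
    (hconv : ConvexOn ℝ (Icc (0:ℝ) 1) c) (hc0 : c 0 = 0)
    (hcmono : MonotoneOn c (Icc (0:ℝ) 1))
    (hsand : ∀ x ∈ Icc (0:ℝ) 1, deriv c 0 * x ≤ c x) (hc'0 : 0 < deriv c 0)
    {ω : ℝ} (hω0 : 0 ≤ ω)
    (hωp : ∀ x ∈ Icc (0:ℝ) 1, ∀ y ∈ Icc (0:ℝ) 1, |x - y| ≤ h → |pstar x - pstar y| ≤ ω)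
    {S : ℝ} (hS : 0 ≤ S) (m : ℕ)
    (IHL : ∀ j : ℕ, (j:ℝ) * h ≤ 1 →
      pstar ((j:ℝ)*h) - gridVal c g δ h j ≤ Bnd c δ S m (gridVal c g δ h j)) :
    ∀ x : ℝ, 0 ≤ x → x + h ≤ 1 →
      pstar x ≤ interp h (gridVal c g δ h) x + ω +
        Bnd c δ S m (interp h (gridVal c g δ h) x) := by
  intro x hx0 hx1
  obtain ⟨θ, hθ0, hθ1, hxe, he⟩ := interp_rep (gridVal c g δ h) hh hx0
  set i := ⌊x / h⌋₊ with hidef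
  have hih : (i:ℝ)*h ≤ x := by nlinarith [hxe]
  have hih0 : (0:ℝ) ≤ (i:ℝ)*h := by positivity
  have hi1h : ((i:ℝ)+1)*h ≤ 1 := by nlinarith [hxe]
  have hx' : x ≤ 1 := by linarith
  have hδpos : (0:ℝ) < δ := by linarith
  have hc1 := IHL i (by nlinarith)
  have habs1 : |(i:ℝ)*h - x| ≤ h := by
    rw [hxe]; rw [abs_of_nonpos (by nlinarith)]; nlinarith
  have hωi : pstar x ≤ pstar ((i:ℝ)*h) + ω := by
    have := hωp ((i:ℝ)*h) ⟨hih0, by linarith⟩ x ⟨hx0, hx'⟩ habs1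
    have h2 := neg_abs_le (pstar ((i:ℝ)*h) - pstar x)
    linarith
  have hPmono : gridVal c g δ h i ≤ gridVal c g δ h (i+1) :=
    grid_mono hh hδ1 hgn hg1 hc0 hsand hc'0 hcmono i hi1h
  have hPi_le : gridVal c g δ h i ≤ interp h (gridVal c g δ h) x := by
    rw [he]; nlinarith
  have hPi0 : 0 ≤ gridVal c g δ h i := by
    have := (grid_sandwich hh hδ1 hgn hg1 hc0 hsand hc'0 i (by nlinarith)).1
    nlinarith
  have hBm1 : Bnd c δ S m (gridVal c g δ h i) ≤
      Bnd c δ S m (interp h (gridVal c g δ h) x) :=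
    Bnd_mono hconv hc0 hsand hc'0 hδpos hS m hPi0 hPi_le
  linarith

end S5
end AlgPAux4
namespace AlgPAux4
open AlgPAux AlgPAux2 AlgPAux3

section S6
variable {c : ℝ → ℝ} {g : ℕ → ℝ} {δ : ℝ} {h : ℝ} {pstar : ℝ → ℝ}

set_option maxHeartbeats 1000000 in
lemma stepU (hh : 0 < h) (hδ : 1 < δ) (hgn : ∀ k : ℕ, 1 ≤ k → 0 ≤ g k) (hg1 : g 1 = 0)
    (hconv : ConvexOn ℝ (Icc (0:ℝ) 1) c) (hc0 : c 0 = 0)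
    (hcmono : MonotoneOn c (Icc (0:ℝ) 1))
    (hsand : ∀ x ∈ Icc (0:ℝ) 1, deriv c 0 * x ≤ c x) (hc'0 : 0 < deriv c 0)
    (hps : ∀ x ∈ Icc (0:ℝ) 1, deriv c 0 * x ≤ pstar x ∧ pstar x ≤ c x)
    (hp_fix : ∀ s ∈ Icc (0:ℝ) 1, Tmap c g δ pstar s = pstar s)
    {ω W ν : ℝ} (hω0 : 0 ≤ ω) (hW0 : 0 ≤ W) (hν : 0 < ν) (hν1 : ν ≤ 1)
    (hωp : ∀ x ∈ Icc (0:ℝ) 1, ∀ y ∈ Icc (0:ℝ) 1, |x - y| ≤ h → |pstar x - pstar y| ≤ ω)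
    (hWc : ∀ x ∈ Icc (0:ℝ) 1, ∀ y ∈ Icc (0:ℝ) 1, |x - y| ≤ h → |c x - c y| ≤ W)
    {K₀ : ℕ} (hK1 : 1 ≤ K₀) (hgK : ∀ k : ℕ, K₀ ≤ k → c 1 + 2 ≤ g k)
    {S S' : ℝ} (hS : 0 ≤ S) (hS' : 0 < S')
    (harith : ν + W + δ*(K₀:ℝ)*(2*ω + S) ≤ S')
    (m : ℕ)
    (IHU : ∀ j : ℕ, (j:ℝ)*h ≤ 1 →
      gridVal c g δ h j - pstar ((j:ℝ)*h) ≤ Bnd c δ S m (pstar ((j:ℝ)*h))) :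
    ∀ j : ℕ, (j:ℝ)*h ≤ 1 →
      gridVal c g δ h j - pstar ((j:ℝ)*h) ≤ Bnd c δ S' (m+1) (pstar ((j:ℝ)*h)) := by
  have hδ1 : 1 ≤ δ := hδ.le
  have hδpos : 0 < δ := by linarith
  have hpnn : ∀ x : ℝ, 0 ≤ x → x ≤ 1 → 0 ≤ pstar x := fun x hx0 hx1 =>
    le_trans (mul_nonneg hc'0.le hx0) ((hps x ⟨hx0, hx1⟩).1)
  have hcnn : ∀ x ∈ Icc (0:ℝ) 1, 0 ≤ c x := fun x hx =>
    le_trans (mul_nonneg hc'0.le hx.1) (hsand x hx)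
  intro j hj1
  have hjh0 : (0:ℝ) ≤ (j:ℝ)*h := by positivity
  have hVnn : 0 ≤ pstar ((j:ℝ)*h) := hpnn _ hjh0 hj1
  by_cases hcap : (pstar ((j:ℝ)*h) + S')/(δ^(m+1) * deriv c 0) < 1
  swap
  · -- capped case
    push_neg at hcap
    unfold Bnd
    rw [min_eq_right hcap]
    have hsw := grid_sandwich hh hδ1 hgn hg1 hc0 hsand hc'0 j hj1
    have hps' := (hps ((j:ℝ)*h) ⟨hjh0, hj1⟩).1
    have hφm : phiF c ((j:ℝ)*h) ≤ phiF c 1 := phi_mono hconv hc0 hsand hjh0 hj1 le_rfl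
    have hδp : (1:ℝ) ≤ δ^(m+1) := one_le_pow₀ hδ1
    have hφ1nn : 0 ≤ phiF c 1 := phi_nonneg hsand ⟨zero_le_one, le_rfl⟩
    have hphieq : phiF c ((j:ℝ)*h) = c ((j:ℝ)*h) - deriv c 0 * ((j:ℝ)*h) := rfl
    have hprod : phiF c 1 ≤ δ^(m+1) * phiF c 1 := le_mul_of_one_le_left hφ1nn hδp
    linarith only [hsw.2, hps', hφm, hphieq, hprod, hS'.le]
  · match j with
    | 0 =>
      have hz : ((0:ℕ):ℝ) * h = 0 := by norm_num
      rw [hz]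
      have hp0 : pstar 0 = 0 := by
        have h1 := (hps 0 ⟨le_refl 0, zero_le_one⟩).1
        have h2 := (hps 0 ⟨le_refl 0, zero_le_one⟩).2
        rw [hc0] at h2; nlinarith
      rw [hp0, gridVal_zero]
      have := Bnd_nonneg (c := c) hsand hc'0 hδpos (le_of_lt hS') (m+1) (le_refl (0:ℝ))
      linarith
    | Nat.succ j' =>
      have hcast : ((Nat.succ j' : ℕ):ℝ) = (j':ℝ)+1 := by push_cast; ring
      rw [hcast] at hj1 hcap ⊢
      obtain ⟨s, hsdef⟩ : ∃ s : ℝ, s = ((j':ℝ)+1)*h := ⟨_, rfl⟩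
      rw [← hsdef] at hj1 hcap ⊢
      have hsplit : (j':ℝ)*h + h = s := by rw [hsdef]; ring
      have hjh' : (0:ℝ) ≤ (j':ℝ)*h := by positivity
      have hs0 : 0 ≤ s := by linarith
      have hsIcc : s ∈ Icc (0:ℝ) 1 := ⟨hs0, hj1⟩
      have hjhs : (j':ℝ)*h ≤ s := by linarith
      obtain ⟨k, t, hk, ht0, hts, hlt⟩ :=
        pstar_nearopt hδpos hgn hcnn hpnn hp_fix hsIcc hν
      have hk1 : (1:ℝ) ≤ (k:ℝ) := by exact_mod_cast hk
      have hkpos : (0:ℝ) < (k:ℝ) := by linarith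
      have hc1pos : pstar s ≤ c 1 :=
        le_trans (hps s hsIcc).2 (hcmono hsIcc ⟨zero_le_one, le_rfl⟩ hj1)
      have htk_le : t/(k:ℝ) ≤ t := div_le_self ht0 hk1
      have htkIcc : t/(k:ℝ) ∈ Icc (0:ℝ) 1 := ⟨by positivity, by linarith [hsIcc.2]⟩
      have hstIcc : s - t ∈ Icc (0:ℝ) 1 := ⟨by linarith, by linarith⟩
      have hcst : 0 ≤ c (s - t) := hcnn _ hstIcc
      have hgk0 : 0 ≤ g k := hgn k hk
      have hpst : 0 ≤ pstar (t/(k:ℝ)) := hpnn _ htkIcc.1 htkIcc.2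
      have hkK : (k:ℝ) ≤ (K₀:ℝ) := by
        by_contra hcon
        push_neg at hcon
        have hkK' : K₀ ≤ k := by exact_mod_cast hcon.le
        have hgk := hgK k hkK'
        have hnn : 0 ≤ δ * (k:ℝ) * pstar (t/(k:ℝ)) := by positivity
        linarith
      obtain ⟨t', ht'def⟩ : ∃ t' : ℝ, t' = min t ((j':ℝ)*h) := ⟨_, rfl⟩
      have ht'0 : 0 ≤ t' := ht'def ▸ le_min ht0 hjh'
      have ht'j : t' ≤ (j':ℝ)*h := ht'def ▸ min_le_right _ _
      have ht't : t' ≤ t := ht'def ▸ min_le_left _ _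
      have htt' : t - t' ≤ h := by
        rcases le_total t ((j':ℝ)*h) with hcs' | hcs'
        · rw [ht'def, min_eq_left hcs']; linarith
        · rw [ht'def, min_eq_right hcs']; linarith
      obtain ⟨x, hxdef⟩ : ∃ x : ℝ, x = t'/(k:ℝ) := ⟨_, rfl⟩
      have hx0 : 0 ≤ x := by rw [hxdef]; positivity
      have hxt' : x ≤ t' := hxdef ▸ div_le_self ht'0 hk1
      have hxj : x ≤ (j':ℝ)*h := le_trans hxt' ht'j
      have hxh1 : x + h ≤ 1 := by linarith
      have hphlow : ∀ z : ℝ, 0 ≤ z → z ≤ (j':ℝ)*h →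
          deriv c 0 * z ≤ interp h (gridVal c g δ h) z := fun z hz0 hzJ =>
        ph_lower hh hδ1 hgn hg1 hc0 hsand hc'0 (J := j') (by linarith) hz0 hzJ
      have hgle : gridVal c g δ h (j'+1) ≤
          c (s - t') + g k + δ * (k:ℝ) * interp h (gridVal c g δ h) x := by
        rw [hxdef, hsdef]
        rw [gridVal_succ hh]
        exact csInf_le
          (oSet_bddBelow hδ1 hgn hsand hc'0 (hsdef ▸ hj1) hjh' (hsdef ▸ hjhs) hphlow)
          (oSet_mem hk ht'0 ht'j)
      have hcW : c (s - t') ≤ c (s - t) + W := by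
        have habs : |(s - t') - (s - t)| ≤ h := by
          rw [abs_of_nonneg (by linarith)]; linarith
        have h1 := hWc (s - t') ⟨by linarith, by linarith⟩ (s - t) hstIcc habs
        have h2 := le_abs_self (c (s - t') - c (s - t))
        linarith
      have hA := subA hh hδ1 hconv hc0 hsand hc'0 hpnn hω0 hωp hS m IHU x hx0 hxh1
      have hωx : pstar x ≤ pstar (t/(k:ℝ)) + ω := by
        have habs : |x - t/(k:ℝ)| ≤ h := by
          have hle : x ≤ t/(k:ℝ) := by rw [hxdef]; gcongr
          rw [abs_of_nonpos (by linarith)]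
          have h1 : t/(k:ℝ) - x = (t - t')/(k:ℝ) := by rw [hxdef]; field_simp
          have h2 : (t - t')/(k:ℝ) ≤ t - t' := div_le_self (by linarith) hk1
          linarith
        have h1 := hωp x ⟨hx0, by linarith⟩ (t/(k:ℝ)) htkIcc habs
        have h2 := le_abs_self (pstar x - pstar (t/(k:ℝ)))
        linarith
      have hpxnn : 0 ≤ pstar x := hpnn x hx0 (by linarith)
      have hBm : Bnd c δ S m (pstar x + ω) ≤ Bnd c δ S m (pstar (t/(k:ℝ)) + 2*ω) :=
        Bnd_mono hconv hc0 hsand hc'0 hδpos hS m (by linarith) (by linarith)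
      obtain ⟨us, husdef⟩ : ∃ u : ℝ, u = (pstar s + S')/(δ^(m+1) * deriv c 0) := ⟨_, rfl⟩
      obtain ⟨ut, hutdef⟩ : ∃ u : ℝ, u = (pstar (t/(k:ℝ)) + 2*ω + S)/(δ^m * deriv c 0) :=
        ⟨_, rfl⟩
      have hδm : (0:ℝ) < δ^m := by positivity
      have hδm1 : (0:ℝ) < δ^(m+1) := by positivity
      have hpsnn : 0 ≤ pstar s := hpnn s hs0 hj1
      have hus0 : 0 < us := by
        rw [husdef]
        exact div_pos (by linarith) (by positivity)
      have hus1 : us < 1 := by rw [husdef]; exact hcap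
      have hut0 : 0 ≤ ut := by
        rw [hutdef]
        exact div_nonneg (by linarith) (by positivity)
      have hωS : (0:ℝ) ≤ 2*ω + S := by linarith
      have hkey : δ * (k:ℝ) * (pstar (t/(k:ℝ)) + 2*ω + S) ≤ pstar s + S' := by
        have h1 : δ * (k:ℝ) * pstar (t/(k:ℝ)) ≤ pstar s + ν - c (s-t) - g k := by
          linarith only [hlt]
        have h2 : δ * (k:ℝ) * (2*ω + S) ≤ δ * (K₀:ℝ) * (2*ω + S) :=
          mul_le_mul_of_nonneg_right (mul_le_mul_of_nonneg_left hkK hδpos.le) hωS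
        have h3 : δ * (k:ℝ) * (pstar (t/(k:ℝ)) + 2*ω + S) =
            δ * (k:ℝ) * pstar (t/(k:ℝ)) + δ * (k:ℝ) * (2*ω + S) := by ring
        linarith only [h1, h2, h3, hcst, hgk0, harith, hW0]
      have hutk : ut ≤ us / (k:ℝ) := by
        rw [hutdef, husdef, div_div, div_le_div_iff₀ (by positivity) (by positivity)]
        have hmul := mul_le_mul_of_nonneg_right hkey
          (le_of_lt (show (0:ℝ) < δ^m * deriv c 0 by positivity))
        have hpow : δ^(m+1) = δ^m * δ := pow_succ δ m
        have heq : (pstar (t/(k:ℝ)) + 2*ω + S) * (δ^(m+1) * deriv c 0 * (k:ℝ)) =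
            δ * (k:ℝ) * (pstar (t/(k:ℝ)) + 2*ω + S) * (δ^m * deriv c 0) := by
          rw [hpow]; ring
        rw [heq]
        exact hmul
      have husk1 : us / (k:ℝ) ≤ 1 := le_trans (div_le_self hus0.le hk1) hus1.le
      have hut1 : ut ≤ 1 := le_trans hutk husk1
      have hφ1 : phiF c ut ≤ phiF c (us/(k:ℝ)) :=
        phi_mono hconv hc0 hsand hut0 hutk husk1
      have hφ2 : (k:ℝ) * phiF c (us/(k:ℝ)) ≤ phiF c us := phi_scale hconv hc0 hk1 hus0 hus1.le
      have hkφ : (k:ℝ) * phiF c ut ≤ phiF c us := by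
        have h1 := mul_le_mul_of_nonneg_left hφ1 hkpos.le
        linarith only [h1, hφ2]
      have hBB : Bnd c δ S m (pstar (t/(k:ℝ)) + 2*ω) = δ^m * phiF c ut + S := by
        unfold Bnd
        rw [← hutdef, min_eq_left hut1]
      have m1 : δ * (k:ℝ) * interp h (gridVal c g δ h) x ≤
          δ * (k:ℝ) * (pstar x + ω + Bnd c δ S m (pstar x + ω)) :=
        mul_le_mul_of_nonneg_left hA (by positivity)
      have m2 : δ * (k:ℝ) * (pstar x + ω + Bnd c δ S m (pstar x + ω)) ≤
          δ * (k:ℝ) * (pstar (t/(k:ℝ)) + 2*ω + (δ^m * phiF c ut + S)) := by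
        refine mul_le_mul_of_nonneg_left ?_ (by positivity)
        rw [← hBB]; linarith
      have m4 : δ * (k:ℝ) * (δ^m * phiF c ut) ≤ δ^(m+1) * phiF c us := by
        have h1 := mul_le_mul_of_nonneg_left hkφ
          (le_of_lt (show (0:ℝ) < δ * δ^m by positivity))
        have hpow : δ^(m+1) = δ^m * δ := pow_succ δ m
        calc δ * (k:ℝ) * (δ^m * phiF c ut) = δ * δ^m * ((k:ℝ) * phiF c ut) := by ring
          _ ≤ δ * δ^m * phiF c us := h1
          _ = δ^(m+1) * phiF c us := by rw [hpow]; ring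
      have m5 : δ * (k:ℝ) * (2*ω + S) ≤ δ * (K₀:ℝ) * (2*ω + S) :=
        mul_le_mul_of_nonneg_right (mul_le_mul_of_nonneg_left hkK hδpos.le) hωS
      unfold Bnd
      rw [← husdef, min_eq_left hus1.le]
      have expand : δ * (k:ℝ) * (pstar (t/(k:ℝ)) + 2*ω + (δ^m * phiF c ut + S)) =
          δ * (k:ℝ) * pstar (t/(k:ℝ)) + δ * (k:ℝ) * (2*ω + S) +
            δ * (k:ℝ) * (δ^m * phiF c ut) := by ring
      linarith only [hgle, hcW, m1, m2, m4, m5, hlt, harith, expand, hgk0, hcst]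

end S6
end AlgPAux4
namespace AlgPAux4
open AlgPAux AlgPAux2 AlgPAux3

section S7
variable {c : ℝ → ℝ} {g : ℕ → ℝ} {δ : ℝ} {h : ℝ} {pstar : ℝ → ℝ}

set_option maxHeartbeats 1000000 in
lemma stepL (hh : 0 < h) (hδ : 1 < δ) (hgn : ∀ k : ℕ, 1 ≤ k → 0 ≤ g k) (hg1 : g 1 = 0)
    (hconv : ConvexOn ℝ (Icc (0:ℝ) 1) c) (hc0 : c 0 = 0)
    (hcmono : MonotoneOn c (Icc (0:ℝ) 1))
    (hsand : ∀ x ∈ Icc (0:ℝ) 1, deriv c 0 * x ≤ c x) (hc'0 : 0 < deriv c 0)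
    (hps : ∀ x ∈ Icc (0:ℝ) 1, deriv c 0 * x ≤ pstar x ∧ pstar x ≤ c x)
    (hp_fix : ∀ s ∈ Icc (0:ℝ) 1, Tmap c g δ pstar s = pstar s)
    {ω W ν : ℝ} (hω0 : 0 ≤ ω) (hW0 : 0 ≤ W) (hν : 0 < ν) (hν1 : ν ≤ 1)
    (hωp : ∀ x ∈ Icc (0:ℝ) 1, ∀ y ∈ Icc (0:ℝ) 1, |x - y| ≤ h → |pstar x - pstar y| ≤ ω)
    {K₀ : ℕ} (hK1 : 1 ≤ K₀) (hgK : ∀ k : ℕ, K₀ ≤ k → c 1 + 2 ≤ g k)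
    {S S' : ℝ} (hS : 0 ≤ S) (hS' : 0 < S')
    (harith : ν + W + δ*(K₀:ℝ)*(2*ω + S) ≤ S')
    (m : ℕ)
    (IHL : ∀ j : ℕ, (j:ℝ)*h ≤ 1 →
      pstar ((j:ℝ)*h) - gridVal c g δ h j ≤ Bnd c δ S m (gridVal c g δ h j)) :
    ∀ j : ℕ, (j:ℝ)*h ≤ 1 →
      pstar ((j:ℝ)*h) - gridVal c g δ h j ≤ Bnd c δ S' (m+1) (gridVal c g δ h j) := by
  have hδ1 : 1 ≤ δ := hδ.le
  have hδpos : 0 < δ := by linarith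
  have hpnn : ∀ x : ℝ, 0 ≤ x → x ≤ 1 → 0 ≤ pstar x := fun x hx0 hx1 =>
    le_trans (mul_nonneg hc'0.le hx0) ((hps x ⟨hx0, hx1⟩).1)
  have hcnn : ∀ x ∈ Icc (0:ℝ) 1, 0 ≤ c x := fun x hx =>
    le_trans (mul_nonneg hc'0.le hx.1) (hsand x hx)
  have hδK0ω : (0:ℝ) ≤ δ*(K₀:ℝ)*ω := by positivity
  intro j hj1
  have hjh0 : (0:ℝ) ≤ (j:ℝ)*h := by positivity
  have hsw := grid_sandwich hh hδ1 hgn hg1 hc0 hsand hc'0 j hj1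
  have hGnn : 0 ≤ gridVal c g δ h j := le_trans (by positivity) hsw.1
  by_cases hcap : (gridVal c g δ h j + S')/(δ^(m+1) * deriv c 0) < 1
  swap
  · push_neg at hcap
    unfold Bnd
    rw [min_eq_right hcap]
    have hps' := (hps ((j:ℝ)*h) ⟨hjh0, hj1⟩).2
    have hφm : phiF c ((j:ℝ)*h) ≤ phiF c 1 := phi_mono hconv hc0 hsand hjh0 hj1 le_rfl
    have hδp : (1:ℝ) ≤ δ^(m+1) := one_le_pow₀ hδ1
    have hφ1nn : 0 ≤ phiF c 1 := phi_nonneg hsand ⟨zero_le_one, le_rfl⟩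
    have hphieq : phiF c ((j:ℝ)*h) = c ((j:ℝ)*h) - deriv c 0 * ((j:ℝ)*h) := rfl
    have hprod : phiF c 1 ≤ δ^(m+1) * phiF c 1 := le_mul_of_one_le_left hφ1nn hδp
    linarith only [hsw.1, hps', hφm, hphieq, hprod, hS'.le]
  · match j with
    | 0 =>
      have hz : ((0:ℕ):ℝ) * h = 0 := by norm_num
      rw [hz]
      have hp0 : pstar 0 = 0 := by
        have h1 := (hps 0 ⟨le_refl 0, zero_le_one⟩).1
        have h2 := (hps 0 ⟨le_refl 0, zero_le_one⟩).2
        rw [hc0] at h2; nlinarith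
      rw [hp0, gridVal_zero]
      have := Bnd_nonneg (c := c) hsand hc'0 hδpos (le_of_lt hS') (m+1) (le_refl (0:ℝ))
      linarith
    | Nat.succ j' =>
      have hcast : ((Nat.succ j' : ℕ):ℝ) = (j':ℝ)+1 := by push_cast; ring
      rw [hcast] at hj1 hsw ⊢
      obtain ⟨s, hsdef⟩ : ∃ s : ℝ, s = ((j':ℝ)+1)*h := ⟨_, rfl⟩
      rw [← hsdef] at hj1 hsw ⊢
      have hsplit : (j':ℝ)*h + h = s := by rw [hsdef]; ring
      have hjh' : (0:ℝ) ≤ (j':ℝ)*h := by positivity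
      have hs0 : 0 ≤ s := by linarith
      have hsIcc : s ∈ Icc (0:ℝ) 1 := ⟨hs0, hj1⟩
      have hGle : gridVal c g δ h (j'+1) ≤ c 1 :=
        le_trans hsw.2 (hcmono hsIcc ⟨zero_le_one, le_rfl⟩ hj1)
      obtain ⟨k, t, hk, ht0, htj, hlt⟩ :=
        grid_nearopt (δ := δ) hh hδ1 hgn hg1 hc0 hsand hc'0 (j := j')
          (hsdef ▸ hj1) hν
      rw [← hsdef] at hlt
      have hk1 : (1:ℝ) ≤ (k:ℝ) := by exact_mod_cast hk
      have hkpos : (0:ℝ) < (k:ℝ) := by linarith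
      have hts : t ≤ s := by linarith
      have htkIcc : t/(k:ℝ) ∈ Icc (0:ℝ) 1 :=
        ⟨by positivity, by linarith [div_le_self ht0 hk1]⟩
      have hstIcc : s - t ∈ Icc (0:ℝ) 1 := ⟨by linarith, by linarith⟩
      have hcst : 0 ≤ c (s - t) := hcnn _ hstIcc
      have hgk0 : 0 ≤ g k := hgn k hk
      obtain ⟨x, hxdef⟩ : ∃ x : ℝ, x = t/(k:ℝ) := ⟨_, rfl⟩
      have hx0 : 0 ≤ x := by rw [hxdef]; positivity
      have hxj : x ≤ (j':ℝ)*h := by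
        rw [hxdef]; exact le_trans (div_le_self ht0 hk1) htj
      have hxh1 : x + h ≤ 1 := by linarith
      have hphx_nn : 0 ≤ interp h (gridVal c g δ h) x :=
        ph_nonneg hh hδ1 hgn hg1 hc0 hsand hc'0 (J := j') (by linarith) hx0 hxj
      rw [← hxdef] at hlt
      have hkK : (k:ℝ) ≤ (K₀:ℝ) := by
        by_contra hcon
        push_neg at hcon
        have hkK' : K₀ ≤ k := by exact_mod_cast hcon.le
        have hgk := hgK k hkK'
        have hnn : 0 ≤ δ * (k:ℝ) * interp h (gridVal c g δ h) x := by positivity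
        linarith
      have hple : pstar s ≤ c (s - t) + g k + δ * (k:ℝ) * pstar x := by
        rw [hxdef]
        exact pstar_le_opt hδpos hgn hcnn hpnn hp_fix hsIcc hk ht0 hts
      have hB := subB hh hδ1 hgn hg1 hconv hc0 hcmono hsand hc'0 hω0 hωp hS m IHL
        x hx0 hxh1
      obtain ⟨us, husdef⟩ : ∃ u : ℝ, u = (gridVal c g δ h (j'+1) + S')/(δ^(m+1) * deriv c 0) :=
        ⟨_, rfl⟩
      obtain ⟨ut, hutdef⟩ : ∃ u : ℝ,
          u = (interp h (gridVal c g δ h) x + S)/(δ^m * deriv c 0) := ⟨_, rfl⟩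
      have hδm : (0:ℝ) < δ^m := by positivity
      have hGnn' : 0 ≤ gridVal c g δ h (j'+1) := le_trans (by positivity) hsw.1
      have hus0 : 0 < us := by
        rw [husdef]
        exact div_pos (by linarith) (by positivity)
      have hus1 : us < 1 := by rw [husdef]; exact hcap
      have hut0 : 0 ≤ ut := by
        rw [hutdef]
        exact div_nonneg (by linarith) (by positivity)
      have hωS : (0:ℝ) ≤ ω + S := by linarith
      have h1 : δ * (k:ℝ) * interp h (gridVal c g δ h) x ≤
          gridVal c g δ h (j'+1) + ν - c (s-t) - g k := by linarith only [hlt]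
      have hkey : δ * (k:ℝ) * (interp h (gridVal c g δ h) x + S) ≤
          gridVal c g δ h (j'+1) + S' := by
        have h2 : δ * (k:ℝ) * S ≤ δ * (K₀:ℝ) * S :=
          mul_le_mul_of_nonneg_right (mul_le_mul_of_nonneg_left hkK hδpos.le) hS
        have h3 : δ * (k:ℝ) * (interp h (gridVal c g δ h) x + S) =
            δ * (k:ℝ) * interp h (gridVal c g δ h) x + δ * (k:ℝ) * S := by ring
        linarith only [h1, h2, h3, hcst, hgk0, harith, hW0, hδK0ω]
      have hutk : ut ≤ us / (k:ℝ) := by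
        rw [hutdef, husdef, div_div, div_le_div_iff₀ (by positivity) (by positivity)]
        have hmul := mul_le_mul_of_nonneg_right hkey
          (le_of_lt (show (0:ℝ) < δ^m * deriv c 0 by positivity))
        have hpow : δ^(m+1) = δ^m * δ := pow_succ δ m
        have heq : (interp h (gridVal c g δ h) x + S) * (δ^(m+1) * deriv c 0 * (k:ℝ)) =
            δ * (k:ℝ) * (interp h (gridVal c g δ h) x + S) * (δ^m * deriv c 0) := by
          rw [hpow]; ring
        rw [heq]
        exact hmul
      have husk1 : us / (k:ℝ) ≤ 1 := le_trans (div_le_self hus0.le hk1) hus1.le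
      have hut1 : ut ≤ 1 := le_trans hutk husk1
      have hφ1 : phiF c ut ≤ phiF c (us/(k:ℝ)) :=
        phi_mono hconv hc0 hsand hut0 hutk husk1
      have hφ2 : (k:ℝ) * phiF c (us/(k:ℝ)) ≤ phiF c us := phi_scale hconv hc0 hk1 hus0 hus1.le
      have hkφ : (k:ℝ) * phiF c ut ≤ phiF c us := by
        have hmm := mul_le_mul_of_nonneg_left hφ1 hkpos.le
        linarith only [hmm, hφ2]
      have hBB : Bnd c δ S m (interp h (gridVal c g δ h) x) = δ^m * phiF c ut + S := by
        unfold Bnd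
        rw [← hutdef, min_eq_left hut1]
      have m1 : δ * (k:ℝ) * pstar x ≤
          δ * (k:ℝ) * (interp h (gridVal c g δ h) x + ω + (δ^m * phiF c ut + S)) := by
        refine mul_le_mul_of_nonneg_left ?_ (by positivity)
        rw [← hBB]; linarith only [hB, hS]
      have m4 : δ * (k:ℝ) * (δ^m * phiF c ut) ≤ δ^(m+1) * phiF c us := by
        have hmm := mul_le_mul_of_nonneg_left hkφ
          (le_of_lt (show (0:ℝ) < δ * δ^m by positivity))
        have hpow : δ^(m+1) = δ^m * δ := pow_succ δ m
        calc δ * (k:ℝ) * (δ^m * phiF c ut) = δ * δ^m * ((k:ℝ) * phiF c ut) := by ring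
          _ ≤ δ * δ^m * phiF c us := hmm
          _ = δ^(m+1) * phiF c us := by rw [hpow]; ring
      have m5 : δ * (k:ℝ) * (ω + S) ≤ δ * (K₀:ℝ) * (ω + S) :=
        mul_le_mul_of_nonneg_right (mul_le_mul_of_nonneg_left hkK hδpos.le) hωS
      unfold Bnd
      rw [← husdef, min_eq_left hus1.le]
      have expand : δ * (k:ℝ) * (interp h (gridVal c g δ h) x + ω + (δ^m * phiF c ut + S)) =
          δ * (k:ℝ) * interp h (gridVal c g δ h) x + δ * (k:ℝ) * (ω + S) +
            δ * (k:ℝ) * (δ^m * phiF c ut) := by ring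
      linarith only [hple, m1, h1, m5, m4, expand, harith, hδK0ω, hW0, hcst, hgk0]

end S7
end AlgPAux4
namespace AlgPAux4
open AlgPAux AlgPAux2 AlgPAux3

section S8
variable {c : ℝ → ℝ} {g : ℕ → ℝ} {δ : ℝ} {h : ℝ} {pstar : ℝ → ℝ}

set_option maxHeartbeats 1000000 in
theorem claims (hh : 0 < h) (hδ : 1 < δ) (hgn : ∀ k : ℕ, 1 ≤ k → 0 ≤ g k) (hg1 : g 1 = 0)
    (hconv : ConvexOn ℝ (Icc (0:ℝ) 1) c) (hc0 : c 0 = 0)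
    (hcmono : MonotoneOn c (Icc (0:ℝ) 1))
    (hsand : ∀ x ∈ Icc (0:ℝ) 1, deriv c 0 * x ≤ c x) (hc'0 : 0 < deriv c 0)
    (hps : ∀ x ∈ Icc (0:ℝ) 1, deriv c 0 * x ≤ pstar x ∧ pstar x ≤ c x)
    (hp_fix : ∀ s ∈ Icc (0:ℝ) 1, Tmap c g δ pstar s = pstar s)
    {ω W ν : ℝ} (hω0 : 0 ≤ ω) (hW0 : 0 ≤ W) (hν : 0 < ν) (hν1 : ν ≤ 1)
    (hωp : ∀ x ∈ Icc (0:ℝ) 1, ∀ y ∈ Icc (0:ℝ) 1, |x - y| ≤ h → |pstar x - pstar y| ≤ ω)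
    (hWc : ∀ x ∈ Icc (0:ℝ) 1, ∀ y ∈ Icc (0:ℝ) 1, |x - y| ≤ h → |c x - c y| ≤ W)
    {K₀ : ℕ} (hK1 : 1 ≤ K₀) (hgK : ∀ k : ℕ, K₀ ≤ k → c 1 + 2 ≤ g k)
    (m : ℕ) :
    ∀ j : ℕ, (j:ℝ)*h ≤ 1 →
      (gridVal c g δ h j - pstar ((j:ℝ)*h) ≤
        Bnd c δ ((2*ω+W+ν)*(m:ℝ)*(δ*(K₀:ℝ))^m) m (pstar ((j:ℝ)*h))) ∧
      (pstar ((j:ℝ)*h) - gridVal c g δ h j ≤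
        Bnd c δ ((2*ω+W+ν)*(m:ℝ)*(δ*(K₀:ℝ))^m) m (gridVal c g δ h j)) := by
  have hδ1 : 1 ≤ δ := hδ.le
  have hδpos : 0 < δ := by linarith
  have hK1R : (1:ℝ) ≤ (K₀:ℝ) := by exact_mod_cast hK1
  have hD1 : (1:ℝ) ≤ δ*(K₀:ℝ) := by nlinarith
  have hβ0 : 0 < 2*ω+W+ν := by linarith
  induction m with
  | zero =>
    intro j hj1
    have hjh0 : (0:ℝ) ≤ (j:ℝ)*h := by positivity
    have hsw := grid_sandwich hh hδ1 hgn hg1 hc0 hsand hc'0 j hj1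
    have hps1 := (hps ((j:ℝ)*h) ⟨hjh0, hj1⟩).1
    have hps2 := (hps ((j:ℝ)*h) ⟨hjh0, hj1⟩).2
    have hzero : (2*ω+W+ν)*((0:ℕ):ℝ)*(δ*(K₀:ℝ))^0 = 0 := by norm_num
    constructor
    · unfold Bnd
      rw [hzero]
      simp only [pow_zero, one_mul, add_zero]
      have hminU : (j:ℝ)*h ≤ min (pstar ((j:ℝ)*h) / deriv c 0) 1 := by
        refine le_min ?_ hj1
        rw [le_div_iff₀ hc'0]
        nlinarith
      have hφ := phi_mono hconv hc0 hsand hjh0 hminU (min_le_right _ 1)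
      have hphieq : phiF c ((j:ℝ)*h) = c ((j:ℝ)*h) - deriv c 0 * ((j:ℝ)*h) := rfl
      linarith only [hφ, hphieq, hsw.2, hps1]
    · unfold Bnd
      rw [hzero]
      simp only [pow_zero, one_mul, add_zero]
      have hminL : (j:ℝ)*h ≤ min (gridVal c g δ h j / deriv c 0) 1 := by
        refine le_min ?_ hj1
        rw [le_div_iff₀ hc'0]
        nlinarith [hsw.1]
      have hφ := phi_mono hconv hc0 hsand hjh0 hminL (min_le_right _ 1)
      have hphieq : phiF c ((j:ℝ)*h) = c ((j:ℝ)*h) - deriv c 0 * ((j:ℝ)*h) := rfl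
      linarith only [hφ, hphieq, hsw.1, hps2]
  | succ m IH =>
    have hD0 : (0:ℝ) < δ*(K₀:ℝ) := by linarith
    have hDm : (1:ℝ) ≤ (δ*(K₀:ℝ))^m := one_le_pow₀ hD1
    have hpow : (δ*(K₀:ℝ))^(m+1) = (δ*(K₀:ℝ))^m * (δ*(K₀:ℝ)) := pow_succ _ _
    have hS : 0 ≤ (2*ω+W+ν)*(m:ℝ)*(δ*(K₀:ℝ))^m := by positivity
    have hS' : 0 < (2*ω+W+ν)*((m:ℝ)+1)*(δ*(K₀:ℝ))^(m+1) := by positivity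
    have harith : ν + W + δ*(K₀:ℝ)*(2*ω + (2*ω+W+ν)*(m:ℝ)*(δ*(K₀:ℝ))^m) ≤
        (2*ω+W+ν)*((m:ℝ)+1)*(δ*(K₀:ℝ))^(m+1) := by
      have e2 : ν + W + 2*ω*(δ*(K₀:ℝ)) ≤ (2*ω+W+ν)*(δ*(K₀:ℝ)) := by
        have l1 : W ≤ W*(δ*(K₀:ℝ)) := le_mul_of_one_le_right hW0 hD1
        have l2 : ν ≤ ν*(δ*(K₀:ℝ)) := le_mul_of_one_le_right hν.le hD1
        nlinarith
      have e1 : (2*ω+W+ν)*(δ*(K₀:ℝ)) ≤ (2*ω+W+ν)*((δ*(K₀:ℝ))^m*(δ*(K₀:ℝ))) := by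
        have := mul_le_mul_of_nonneg_left hDm (by positivity : (0:ℝ) ≤ (2*ω+W+ν)*(δ*(K₀:ℝ)))
        nlinarith
      have expand : (2*ω+W+ν)*((m:ℝ)+1)*(δ*(K₀:ℝ))^(m+1) =
          (2*ω+W+ν)*(m:ℝ)*(δ*(K₀:ℝ))^m*(δ*(K₀:ℝ)) +
            (2*ω+W+ν)*((δ*(K₀:ℝ))^m*(δ*(K₀:ℝ))) := by rw [hpow]; ring
      have expand2 : ν + W + δ*(K₀:ℝ)*(2*ω + (2*ω+W+ν)*(m:ℝ)*(δ*(K₀:ℝ))^m) =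
          ν + W + 2*ω*(δ*(K₀:ℝ)) + (2*ω+W+ν)*(m:ℝ)*(δ*(K₀:ℝ))^m*(δ*(K₀:ℝ)) := by ring
      linarith only [e1, e2, expand, expand2]
    intro j hj1
    have hcastm : ((m+1:ℕ):ℝ) = (m:ℝ)+1 := by push_cast; ring
    rw [hcastm]
    constructor
    · exact stepU hh hδ hgn hg1 hconv hc0 hcmono hsand hc'0 hps hp_fix hω0 hW0 hν hν1
        hωp hWc hK1 hgK hS hS' harith m (fun j' hj' => (IH j' hj').1) j hj1
    · exact stepL hh hδ hgn hg1 hconv hc0 hcmono hsand hc'0 hps hp_fix hω0 hW0 hν hν1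
        hωp hK1 hgK hS hS' harith m (fun j' hj' => (IH j' hj').2) j hj1

end S8
end AlgPAux4
namespace AlgPAux4
open AlgPAux AlgPAux2 AlgPAux3

section S9
variable {c : ℝ → ℝ} {δ : ℝ}

lemma Bnd_small (hconv : ConvexOn ℝ (Icc (0:ℝ) 1) c) (hc0 : c 0 = 0)
    (hsand : ∀ x ∈ Icc (0:ℝ) 1, deriv c 0 * x ≤ c x) (hc'0 : 0 < deriv c 0)
    (hδpos : 0 < δ) {S : ℝ} (hS0 : 0 ≤ S) (hS1 : S ≤ 1) {V : ℝ} (hV0 : 0 ≤ V)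
    (hV1 : V ≤ c 1) {m : ℕ} {y₀ ε' : ℝ} (hy₀0 : 0 < y₀)
    (hy₀ : ∀ y : ℝ, 0 ≤ y → y ≤ y₀ → phiF c y ≤ ε' * y) (hε' : 0 ≤ ε')
    (hm : (c 1 + 2)/(deriv c 0 * y₀) ≤ δ^m) :
    Bnd c δ S m V ≤ ε' * ((c 1 + 1)/deriv c 0) + S := by
  unfold Bnd
  have hδm : (0:ℝ) < δ^m := by positivity
  have hu0 : 0 ≤ (V + S)/(δ^m * deriv c 0) := div_nonneg (by linarith) (by positivity)
  have hmin0 : 0 ≤ min ((V + S)/(δ^m * deriv c 0)) 1 := le_min hu0 zero_le_one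
  rw [div_le_iff₀ (by positivity : (0:ℝ) < deriv c 0 * y₀)] at hm
  have huy : (V + S)/(δ^m * deriv c 0) ≤ y₀ := by
    rw [div_le_iff₀ (by positivity)]
    nlinarith
  have hminy : min ((V + S)/(δ^m * deriv c 0)) 1 ≤ y₀ := le_trans (min_le_left _ _) huy
  have hφ := hy₀ _ hmin0 hminy
  have h1 : δ^m * phiF c (min ((V + S)/(δ^m * deriv c 0)) 1) ≤
      δ^m * (ε' * min ((V + S)/(δ^m * deriv c 0)) 1) :=
    mul_le_mul_of_nonneg_left hφ hδm.le
  have h2 : δ^m * (ε' * min ((V + S)/(δ^m * deriv c 0)) 1) ≤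
      δ^m * (ε' * ((V + S)/(δ^m * deriv c 0))) := by
    refine mul_le_mul_of_nonneg_left ?_ hδm.le
    exact mul_le_mul_of_nonneg_left (min_le_left _ _) hε'
  have h3 : δ^m * (ε' * ((V + S)/(δ^m * deriv c 0))) = ε' * ((V + S)/deriv c 0) := by
    field_simp
    try ring
  have h4 : ε' * ((V + S)/deriv c 0) ≤ ε' * ((c 1 + 1)/deriv c 0) := by
    refine mul_le_mul_of_nonneg_left ?_ hε'
    gcongr <;> linarith
  linarith only [h1, h2, h3.le, h3.ge, h4]

end S9
end AlgPAux4

open AlgPAux AlgPAux2 AlgPAux3 AlgPAux4 in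
set_option maxHeartbeats 2000000 in
theorem algP_converges_to_pstar' (c : ℝ → ℝ) (g : ℕ → ℝ) (δ : ℝ)
    (hc_diff : DifferentiableOn ℝ c (Set.Icc 0 1))
    (hc_mono : StrictMonoOn c (Set.Icc 0 1))
    (hc_conv : StrictConvexOn ℝ (Set.Icc 0 1) c)
    (hc0 : c 0 = 0) (hc'0 : 0 < deriv c 0)
    (hg_mono : StrictMonoOn g {k : ℕ | 1 ≤ k})
    (hg1 : g 1 = 0) (hg_nonneg : ∀ k : ℕ, 1 ≤ k → 0 ≤ g k)
    (hg_top : Tendsto g atTop atTop)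
    (hδ : 1 < δ)
    (pstar : ℝ → ℝ)
    (hp_cont : ContinuousOn pstar (Set.Icc 0 1))
    (hp_mem : ∀ s ∈ Set.Icc (0 : ℝ) 1, deriv c 0 * s ≤ pstar s ∧ pstar s ≤ c s)
    (hp_fix : ∀ s ∈ Set.Icc (0 : ℝ) 1, Tmap c g δ pstar s = pstar s) :
    TendstoUniformlyOn (fun n : ℕ => algP c g δ n) pstar atTop (Set.Icc 0 1) := by
  rw [Metric.tendstoUniformlyOn_iff]
  intro ε hε
  have hδ1 : 1 ≤ δ := hδ.le
  have hδpos : (0:ℝ) < δ := by linarith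
  have hconv : ConvexOn ℝ (Icc (0:ℝ) 1) c := hc_conv.convexOn
  have hcmono : MonotoneOn c (Icc (0:ℝ) 1) := hc_mono.monotoneOn
  have hsand : ∀ x ∈ Icc (0:ℝ) 1, deriv c 0 * x ≤ c x := fun x hx =>
    le_trans (hp_mem x hx).1 (hp_mem x hx).2
  have hc1pos : 0 < c 1 := by
    have := hsand 1 ⟨zero_le_one, le_rfl⟩
    nlinarith
  -- K₀
  obtain ⟨K₁, hgK1⟩ := Filter.eventually_atTop.mp (hg_top.eventually_ge_atTop (c 1 + 2))
  obtain ⟨K₀, hK1, hgK⟩ : ∃ K₀ : ℕ, 1 ≤ K₀ ∧ ∀ k : ℕ, K₀ ≤ k → c 1 + 2 ≤ g k :=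
    ⟨max K₁ 1, le_max_right _ _, fun k hk => hgK1 k (le_trans (le_max_left _ _) hk)⟩
  have hK1R : (1:ℝ) ≤ (K₀:ℝ) := by exact_mod_cast hK1
  have hD1 : (1:ℝ) ≤ δ*(K₀:ℝ) := by nlinarith
  have hD0 : (0:ℝ) < δ*(K₀:ℝ) := by linarith
  -- epsilon' and y₀
  have hε' : (0:ℝ) < ε * deriv c 0 / (8*(c 1 + 2)) := by positivity
  obtain ⟨y₀, hy₀0, hy₀1, hy₀⟩ := phi_ratio_zero hc0 hc'0 _ hε'
  -- m
  obtain ⟨m, hm⟩ := ((tendsto_pow_atTop_atTop_of_one_lt hδ).eventually_ge_atTop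
    ((c 1 + 2)/(deriv c 0 * y₀))).exists
  -- rho
  obtain ⟨ρ, hρdef⟩ : ∃ ρ : ℝ,
      ρ = (min 1 (ε/8)) / (4*((m:ℝ)+1)*(δ*(K₀:ℝ))^(m+1) + 1) := ⟨_, rfl⟩
  have hQ0 : (0:ℝ) < 4*((m:ℝ)+1)*(δ*(K₀:ℝ))^(m+1) + 1 := by positivity
  have hQ1 : (1:ℝ) ≤ 4*((m:ℝ)+1)*(δ*(K₀:ℝ))^(m+1) + 1 := by
    have hQaux : (0:ℝ) ≤ 4*((m:ℝ)+1)*(δ*(K₀:ℝ))^(m+1) := by positivity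
    linarith
  have hmin18 : (0:ℝ) < min 1 (ε/8) := lt_min one_pos (by positivity)
  have hρ0 : 0 < ρ := by rw [hρdef]; positivity
  have hρm : ρ ≤ min 1 (ε/8) := by
    rw [hρdef]
    exact div_le_self hmin18.le hQ1
  have hρ1 : ρ ≤ 1 := le_trans hρm (min_le_left _ _)
  have hρε8 : ρ ≤ ε/8 := le_trans hρm (min_le_right _ _)
  -- uniform continuity moduli
  have hpUC := Metric.uniformContinuousOn_iff_le.mp
    (isCompact_Icc.uniformContinuousOn_of_continuous hp_cont) ρ hρ0
  obtain ⟨dp, hdp0, hdp⟩ := hpUC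
  have hcUC := Metric.uniformContinuousOn_iff_le.mp
    (isCompact_Icc.uniformContinuousOn_of_continuous hc_diff.continuousOn) ρ hρ0
  obtain ⟨dc, hdc0, hdc⟩ := hcUC
  -- N₀
  have hhalf : Tendsto (fun n : ℕ => (1/2:ℝ)^n) atTop (nhds 0) := by
    apply tendsto_pow_atTop_nhds_zero_of_lt_one <;> norm_num
  obtain ⟨N₀, hN₀⟩ := (Metric.tendsto_atTop.mp hhalf) (min dp dc) (lt_min hdp0 hdc0)
  refine Filter.eventually_atTop.mpr ⟨N₀, fun n hn => ?_⟩
  -- fix n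
  obtain ⟨h, hhdef⟩ : ∃ h : ℝ, h = (1/2:ℝ)^n := ⟨_, rfl⟩
  have hh : 0 < h := by rw [hhdef]; positivity
  have hdistn := hN₀ n hn
  rw [Real.dist_eq, sub_zero, abs_of_pos (by positivity : (0:ℝ) < (1/2:ℝ)^n)] at hdistn
  rw [← hhdef] at hdistn
  have hhdp : h ≤ dp := le_trans hdistn.le (min_le_left _ _)
  have hhdc : h ≤ dc := le_trans hdistn.le (min_le_right _ _)
  have hωp : ∀ x ∈ Icc (0:ℝ) 1, ∀ y ∈ Icc (0:ℝ) 1, |x - y| ≤ h → |pstar x - pstar y| ≤ ρ := by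
    intro a ha b hb hab
    have := hdp a ha b hb (by rw [Real.dist_eq]; linarith)
    rw [Real.dist_eq] at this
    exact this
  have hWc : ∀ x ∈ Icc (0:ℝ) 1, ∀ y ∈ Icc (0:ℝ) 1, |x - y| ≤ h → |c x - c y| ≤ ρ := by
    intro a ha b hb hab
    have := hdc a ha b hb (by rw [Real.dist_eq]; linarith)
    rw [Real.dist_eq] at this
    exact this
  -- the claims
  have hcl := claims hh hδ hg_nonneg hg1 hconv hc0 hcmono hsand hc'0 hp_mem hp_fix
    hρ0.le hρ0.le hρ0 hρ1 hωp hWc hK1 hgK m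
  -- bound on S
  obtain ⟨S, hSdef⟩ : ∃ S : ℝ, S = (2*ρ+ρ+ρ)*(m:ℝ)*(δ*(K₀:ℝ))^m := ⟨_, rfl⟩
  rw [← hSdef] at hcl
  have hS0 : 0 ≤ S := by rw [hSdef]; positivity
  have hDm0 : (0:ℝ) < (δ*(K₀:ℝ))^m := by positivity
  have hDmm : (δ*(K₀:ℝ))^m ≤ (δ*(K₀:ℝ))^(m+1) := by
    rw [pow_succ]
    exact le_mul_of_one_le_right hDm0.le hD1
  have hSle : S ≤ min 1 (ε/8) := by
    have l1 : (2*ρ+ρ+ρ)*(m:ℝ)*(δ*(K₀:ℝ))^m = (4*(m:ℝ)*(δ*(K₀:ℝ))^m)*ρ := by ring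
    have l2 : 4*(m:ℝ)*(δ*(K₀:ℝ))^m ≤ 4*((m:ℝ)+1)*(δ*(K₀:ℝ))^(m+1) + 1 := by
      have l3 : 4*(m:ℝ)*(δ*(K₀:ℝ))^m ≤ 4*((m:ℝ)+1)*(δ*(K₀:ℝ))^(m+1) := by
        have : (0:ℝ) ≤ (m:ℝ) := Nat.cast_nonneg m
        nlinarith
      linarith
    have l4 : (4*(m:ℝ)*(δ*(K₀:ℝ))^m)*ρ ≤ (4*((m:ℝ)+1)*(δ*(K₀:ℝ))^(m+1) + 1)*ρ :=
      mul_le_mul_of_nonneg_right l2 hρ0.le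
    have l5 : (4*((m:ℝ)+1)*(δ*(K₀:ℝ))^(m+1) + 1)*ρ = min 1 (ε/8) := by
      rw [hρdef]
      field_simp
    rw [hSdef, l1]
    linarith only [l4, l5.le, l5.ge]
  have hS1 : S ≤ 1 := le_trans hSle (min_le_left _ _)
  have hSε8 : S ≤ ε/8 := le_trans hSle (min_le_right _ _)
  have hεbound : (ε * deriv c 0 / (8*(c 1 + 2))) * ((c 1 + 1)/deriv c 0) ≤ ε/8 := by
    have heq : (ε * deriv c 0 / (8*(c 1 + 2))) * ((c 1 + 1)/deriv c 0) =
        ε * (c 1 + 1) / (8*(c 1 + 2)) := by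
      field_simp
    rw [heq, div_le_div_iff₀ (by positivity) (by norm_num : (0:ℝ) < 8)]
    nlinarith
  -- grid error bounds
  have hgrid : ∀ j : ℕ, (j:ℝ)*h ≤ 1 →
      gridVal c g δ h j - pstar ((j:ℝ)*h) ≤ ε/4 ∧
      pstar ((j:ℝ)*h) - gridVal c g δ h j ≤ ε/4 := by
    intro j hj1
    have hjh0 : (0:ℝ) ≤ (j:ℝ)*h := by positivity
    have hsw := grid_sandwich hh hδ1 hg_nonneg hg1 hc0 hsand hc'0 j hj1
    have hcj1 : c ((j:ℝ)*h) ≤ c 1 := hcmono ⟨hjh0, hj1⟩ ⟨zero_le_one, le_rfl⟩ hj1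
    have hpsV : 0 ≤ pstar ((j:ℝ)*h) :=
      le_trans (mul_nonneg hc'0.le hjh0) (hp_mem _ ⟨hjh0, hj1⟩).1
    have hpsV1 : pstar ((j:ℝ)*h) ≤ c 1 := le_trans (hp_mem _ ⟨hjh0, hj1⟩).2 hcj1
    have hGV0 : 0 ≤ gridVal c g δ h j := le_trans (by positivity) hsw.1
    have hGV1 : gridVal c g δ h j ≤ c 1 := le_trans hsw.2 hcj1
    constructor
    · have hb := (hcl j hj1).1
      have hsm := Bnd_small hconv hc0 hsand hc'0 hδpos hS0 hS1 hpsV hpsV1 hy₀0 hy₀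
        hε'.le hm
      linarith only [hb, hsm, hεbound, hSε8]
    · have hb := (hcl j hj1).2
      have hsm := Bnd_small hconv hc0 hsand hc'0 hδpos hS0 hS1 hGV0 hGV1 hy₀0 hy₀
        hε'.le hm
      linarith only [hb, hsm, hεbound, hSε8]
  -- pointwise estimate
  intro x hx
  simp only [algP]
  rw [← hhdef]
  rw [Real.dist_eq]
  obtain ⟨θ, hθ0, hθ1, hxe, he⟩ := interp_rep (gridVal c g δ h) hh hx.1
  obtain ⟨i, hidef⟩ : ∃ i : ℕ, i = ⌊x / h⌋₊ := ⟨_, rfl⟩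
  rw [← hidef] at hxe he
  have hθh0 : 0 ≤ θ * h := mul_nonneg hθ0 hh.le
  have hθh1 : θ * h ≤ 1 * h := mul_le_mul_of_nonneg_right hθ1.le hh.le
  have hih : (i:ℝ)*h ≤ x := by linarith only [hxe, hθh0]
  have hih0 : (0:ℝ) ≤ (i:ℝ)*h := by positivity
  have hih1 : (i:ℝ)*h ≤ 1 := le_trans hih hx.2
  have hgi := hgrid i hih1
  have hωi : |pstar x - pstar ((i:ℝ)*h)| ≤ ρ := by
    refine hωp x hx ((i:ℝ)*h) ⟨hih0, hih1⟩ ?_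
    rw [abs_of_nonneg (by linarith only [hih])]
    linarith only [hxe, hθh1]
  have habs1 := le_abs_self (pstar x - pstar ((i:ℝ)*h))
  have habs2 := neg_abs_le (pstar x - pstar ((i:ℝ)*h))
  rcases eq_or_lt_of_le hθ0 with hθz | hθp
  · -- θ = 0
    rw [he, ← hθz]
    rw [abs_lt]
    constructor
    · linarith only [hgi.1, habs1, habs2, hωi, hρε8, hε]
    · linarith only [hgi.2, habs1, habs2, hωi, hρε8, hε]
  · -- θ > 0 : need (i+1) grid point as well
    have hNh : (2:ℝ)^n * h = 1 := by
      rw [hhdef, ← mul_pow]; norm_num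
    have hsum : ((i:ℝ) + θ) * h ≤ (2:ℝ)^n * h := by rw [hNh, ← hxe]; exact hx.2
    have hiθ : (i:ℝ) + θ ≤ (2:ℝ)^n := le_of_mul_le_mul_right hsum hh
    have hilt : (i:ℝ) < (2:ℝ)^n := by linarith only [hiθ, hθp]
    have hiltn : i < 2^n := by
      have h2 : ((2^n : ℕ):ℝ) = (2:ℝ)^n := by push_cast; ring
      exact_mod_cast h2 ▸ hilt
    have hi1n : (i:ℝ) + 1 ≤ (2:ℝ)^n := by
      have h3 : i + 1 ≤ 2^n := hiltn
      have h2 : ((2^n : ℕ):ℝ) = (2:ℝ)^n := by push_cast; ring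
      rw [← h2]
      exact_mod_cast h3
    have hi1h : ((i:ℝ)+1)*h ≤ 1 := by
      calc ((i:ℝ)+1)*h ≤ (2:ℝ)^n * h := mul_le_mul_of_nonneg_right hi1n hh.le
        _ = 1 := hNh
    have hcast2 : ((i+1:ℕ):ℝ) = (i:ℝ)+1 := by push_cast; ring
    have harg : ((i+1:ℕ):ℝ)*h ≤ 1 := by rw [hcast2]; exact hi1h
    have hgi1' := hgrid (i+1) harg
    rw [hcast2] at hgi1'
    have hωi1 : |pstar x - pstar (((i:ℝ)+1)*h)| ≤ ρ := by
      refine hωp x hx (((i:ℝ)+1)*h) ⟨by positivity, hi1h⟩ ?_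
      rw [abs_of_nonpos (by linarith only [hxe, hθh1])]
      linarith only [hxe, hθh0]
    have habs3 := le_abs_self (pstar x - pstar (((i:ℝ)+1)*h))
    have habs4 := neg_abs_le (pstar x - pstar (((i:ℝ)+1)*h))
    have b1 : pstar x - gridVal c g δ h i ≤ ρ + ε/4 := by
      linarith only [hgi.2, habs1, hωi]
    have b1' : gridVal c g δ h i - pstar x ≤ ρ + ε/4 := by
      linarith only [hgi.1, habs2, hωi]
    have b2 : pstar x - gridVal c g δ h (i+1) ≤ ρ + ε/4 := by
      linarith only [hgi1'.2, habs3, hωi1]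
    have b2' : gridVal c g δ h (i+1) - pstar x ≤ ρ + ε/4 := by
      linarith only [hgi1'.1, habs4, hωi1]
    rw [he, abs_lt]
    have hc1 : (0:ℝ) ≤ 1 - θ := by linarith only [hθ1]
    constructor
    · linarith only [mul_le_mul_of_nonneg_left b1' hc1, mul_le_mul_of_nonneg_left b2' hθ0,
        hρε8, hε]
    · linarith only [mul_le_mul_of_nonneg_left b1 hc1, mul_le_mul_of_nonneg_left b2 hθ0,
        hρε8, hε]

theorem algP_converges_to_pstar (c : ℝ → ℝ) (g : ℕ → ℝ) (δ : ℝ)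
(hc_diff : DifferentiableOn ℝ c (Set.Icc 0 1))
    (hc_mono : StrictMonoOn c (Set.Icc 0 1))
    (hc_conv : StrictConvexOn ℝ (Set.Icc 0 1) c)
    (hc0 : c 0 = 0) (hc'0 : 0 < deriv c 0)
    (hg_mono : StrictMonoOn g {k : ℕ | 1 ≤ k})
    (hg1 : g 1 = 0) (hg_nonneg : ∀ k : ℕ, 1 ≤ k → 0 ≤ g k)
    (hg_top : Tendsto g atTop atTop)
    (hδ : 1 < δ)
    (pstar : ℝ → ℝ)
    (hp_cont : ContinuousOn pstar (Set.Icc 0 1))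
    (hp_mem : ∀ s ∈ Set.Icc (0 : ℝ) 1, deriv c 0 * s ≤ pstar s ∧ pstar s ≤ c s)
    (hp_fix : ∀ s ∈ Set.Icc (0 : ℝ) 1, Tmap c g δ pstar s = pstar s) :
    TendstoUniformlyOn (fun n : ℕ => algP c g δ n) pstar atTop (Set.Icc 0 1) := algP_converges_to_pstar' c g δ hc_diff hc_mono hc_conv hc0 hc'0 hg_mono hg1
    hg_nonneg hg_top hδ pstar hp_cont hp_mem hp_fix
end
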